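/- arXiv:2204.12936 — 2 statements merged into one kernel-verified Lean document; each statement's English description precedes it below -/
import Mathlib

section
/- For 0 ≤ k ≤ n−1, the number of permutations of size n sorted by at most k passes of bubblesort is (k+1)^(n−k−1) · (k+1)!. Consequently, the number of permutations of size n requiring exactly k passes is k!·((k+1)^(n−k) − k^(n−k)). -/
/-- One pass of bubblesort on a list of naturals. -/
def bpass : List ℕ → List ℕ
  | [] => []
  | [a] => [a]
  | a :: b :: l => if b < a then b :: bpass (a :: l) else a :: bpass (b :: l)

/-- The identity permutation 1 2 ... n as a list. -/
def idList (n : ℕ) : List ℕ := List.map (· + 1) (List.range n)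

/-- `l` is (the word of) a permutation of size `n`, i.e. a rearrangement of 1,...,n. -/
def IsPermList (n : ℕ) (l : List ℕ) : Prop := l.Perm (idList n)

/-- position `j` of `l` holds a left-to-right maximum. -/
def IsLTRMax (l : List ℕ) (j : ℕ) : Prop :=
  j < l.length ∧ ∀ i < j, l.getD i 0 < l.getD j 0

instance (l : List ℕ) (j : ℕ) : Decidable (IsLTRMax l j) := by
  unfold IsLTRMax; infer_instance

/-- the number of left-to-right maxima of `l`. -/
def ltrCount (l : List ℕ) : ℕ :=
  ((List.range l.length).filter fun j => decide (IsLTRMax l j)).length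

/-- the length of the longest suffix of `l` consisting of left-to-right maxima. -/
def suffLen (l : List ℕ) : ℕ :=
  ((List.range l.length).takeWhile fun j => decide (IsLTRMax l (l.length - 1 - j))).length

/-- `σ` is a node of the tree `T(π)` of iterated bubblesort preimages. -/
def IsNode (n : ℕ) (π σ : List ℕ) : Prop :=
  IsPermList n σ ∧ ∃ j, bpass^[j] σ = π

/-- `σ` is a node of `T(π)` at height `j` (j passes needed to reach π, and no fewer). -/
def IsNodeAt (n : ℕ) (π σ : List ℕ) (j : ℕ) : Prop :=
  IsPermList n σ ∧ bpass^[j] σ = π ∧ ∀ i < j, bpass^[i] σ ≠ π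

/-- `τ` is a leaf: it has no child, i.e. no bubblesort preimage other than itself. -/
def IsLeafNode (n : ℕ) (τ : List ℕ) : Prop :=
  ¬ ∃ ρ, IsPermList n ρ ∧ ρ ≠ τ ∧ bpass ρ = τ

/-- `T(π)` and `T(τ)` are isomorphic as rooted trees: there is a bijection between
their node sets sending root to root and commuting with the parent map `bpass`. -/
def TreeIso (n : ℕ) (π τ : List ℕ) : Prop :=
  ∃ φ : List ℕ → List ℕ,
    (∀ σ, IsNode n π σ → IsNode n τ (φ σ)) ∧
    (∀ σ σ', IsNode n π σ → IsNode n π σ' → φ σ = φ σ' → σ = σ') ∧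
    (∀ ρ, IsNode n τ ρ → ∃ σ, IsNode n π σ ∧ φ σ = ρ) ∧
    φ π = τ ∧
    (∀ σ, IsNode n π σ → σ ≠ π → φ (bpass σ) = bpass (φ σ))

/-- number of elements strictly greater than `x` before the first occurrence of `x`
(counts all greater elements if `x ∉ l`). -/
def fc (x : ℕ) : List ℕ → ℕ
  | [] => 0
  | a :: l => if a = x then 0 else (if x < a then 1 else 0) + fc x l

lemma bpass_perm : ∀ l : List ℕ, (bpass l).Perm l := by
  intro l
  induction l using bpass.induct with
  | case1 => simp [bpass]
  | case2 a => simp [bpass]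
  | case3 a b l h ih => simpa [bpass, h] using ((ih.cons b).trans (List.Perm.swap a b l))
  | case4 a b l h ih => simpa [bpass, h] using ih.cons a

lemma fc_cons (x a : ℕ) (l : List ℕ) :
    fc x (a :: l) = if a = x then 0 else (if x < a then 1 else 0) + fc x l := rfl

lemma fc_bpass : ∀ l : List ℕ, l.Nodup → ∀ x ∈ l, fc x (bpass l) = fc x l - 1 := by
  intro l
  induction l using bpass.induct with
  | case1 => simp
  | case2 a => intro _ x hx; simp at hx; subst hx; simp [bpass, fc_cons]
  | case3 a b l h ih =>
    intro hnd x hx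
    have hab : a ≠ b := by rintro rfl; simp at hnd
    have hnd' : (a :: l).Nodup := by
      rw [List.nodup_cons] at hnd ⊢
      refine ⟨fun hc => hnd.1 (List.mem_cons_of_mem _ hc), hnd.2.of_cons⟩
    rw [bpass, if_pos h]
    rcases List.mem_cons.1 hx with rfl | hx'
    · -- x = a
      have hthis := ih hnd' x (List.mem_cons_self)
      have h0 : fc x (x :: l) = 0 := by simp [fc_cons]
      rw [h0] at hthis
      rw [fc_cons, if_neg (ne_of_lt h), if_neg (not_lt.2 h.le), fc_cons, if_pos rfl, hthis]
    rcases List.mem_cons.1 hx' with rfl | hx''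
    · -- x = b
      simp [fc_cons, hab, h]
    · -- x ∈ l
      have hax : a ≠ x := fun hc => by subst hc; exact (List.nodup_cons.1 hnd).1 (List.mem_cons_of_mem _ hx'')
      have hbx : b ≠ x := fun hc => by
        subst hc
        exact (List.nodup_cons.1 (List.nodup_cons.1 hnd).2).1 hx''
      have := ih hnd' x (List.mem_cons_of_mem _ hx'')
      rw [fc_cons, if_neg hax] at this
      rw [fc_cons, if_neg hbx, this, fc_cons, if_neg hax, fc_cons, if_neg hbx]
      rcases lt_or_ge x b with h1 | h1
      · simp only [if_pos h1, if_pos (h1.trans h)]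
        omega
      · have h1' : ¬ x < b := not_lt.2 h1
        simp only [if_neg h1']
        omega
  | case4 a b l h ih =>
    intro hnd x hx
    have hab : a ≠ b := by rintro rfl; simp at hnd
    have hba : a < b := lt_of_le_of_ne (not_lt.1 h) hab
    have hnd' : (b :: l).Nodup := hnd.of_cons
    rw [bpass, if_neg h]
    rcases List.mem_cons.1 hx with rfl | hx'
    · simp [fc_cons]
    · have hax : a ≠ x := fun hc => by subst hc; exact (List.nodup_cons.1 hnd).1 hx'
      have := ih hnd' x hx'
      rw [fc_cons, if_neg hax, fc_cons, if_neg hax, this]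
      rcases List.mem_cons.1 hx' with rfl | hx''
      · have : ¬ x < a := not_lt.2 hba.le
        simp [fc_cons, this]
      · have hbx : b ≠ x := fun hc => by subst hc; exact (List.nodup_cons.1 hnd').1 hx''
        rw [fc_cons, if_neg hbx]
        rcases lt_or_ge x a with h1 | h1
        · have h2 : x < b := h1.trans hba
          simp [h1, h2]
        · have h1' : ¬ x < a := not_lt.2 h1
          simp only [if_neg h1']
          omega
lemma fc_iter (k : ℕ) : ∀ l : List ℕ, l.Nodup → ∀ x ∈ l, fc x (bpass^[k] l) = fc x l - k := by
  induction k with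
  | zero => intro l _ x _; simp
  | succ k ih =>
    intro l hnd x hx
    rw [Function.iterate_succ_apply, ih (bpass l) ((bpass_perm l).nodup_iff.2 hnd)
      x ((bpass_perm l).mem_iff.2 hx), fc_bpass l hnd x hx]
    omega

lemma iter_perm (k : ℕ) (l : List ℕ) : (bpass^[k] l).Perm l := by
  induction k with
  | zero => simp
  | succ k ih => rw [Function.iterate_succ_apply']; exact (bpass_perm _).trans ih

lemma sorted_of_fc_zero : ∀ l : List ℕ, l.Nodup → (∀ x ∈ l, fc x l = 0) → l.Pairwise (· < ·) := by
  intro l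
  induction l with
  | nil => simp
  | cons a t ih =>
    intro hnd h0
    have ht : ∀ x ∈ t, fc x t = 0 := by
      intro x hx
      have := h0 x (List.mem_cons_of_mem _ hx)
      have hax : a ≠ x := fun hc => by subst hc; exact (List.nodup_cons.1 hnd).1 hx
      rw [fc_cons, if_neg hax] at this
      omega
    refine List.pairwise_cons.2 ⟨fun x hx => ?_, ih hnd.of_cons ht⟩
    have := h0 x (List.mem_cons_of_mem _ hx)
    have hax : a ≠ x := fun hc => by subst hc; exact (List.nodup_cons.1 hnd).1 hx
    rw [fc_cons, if_neg hax] at this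
    rcases lt_trichotomy a x with h | h | h
    · exact h
    · exact absurd h hax
    · simp [h] at this
  
lemma fc_of_sorted : ∀ l : List ℕ, l.Pairwise (· < ·) → ∀ x ∈ l, fc x l = 0 := by
  intro l
  induction l with
  | nil => simp
  | cons a t ih =>
    intro hs x hx
    rcases List.mem_cons.1 hx with rfl | hx'
    · simp [fc_cons]
    · have hax : a < x := (List.pairwise_cons.1 hs).1 x hx'
      rw [fc_cons, if_neg (ne_of_lt hax), if_neg (not_lt.2 hax.le), ih (List.pairwise_cons.1 hs).2 x hx']

lemma idList_sorted (n : ℕ) : (idList n).Pairwise (· < ·) := by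
  exact List.Pairwise.map _ (fun h => by omega) (List.pairwise_lt_range)

lemma idList_nodup (n : ℕ) : (idList n).Nodup :=
  (List.nodup_range).map (fun a b => by omega)

lemma idList_len (n : ℕ) : (idList n).length = n := by simp [idList]

lemma mem_idList {n x : ℕ} : x ∈ idList n ↔ 1 ≤ x ∧ x ≤ n := by
  simp only [idList, List.mem_map, List.mem_range]
  constructor
  · rintro ⟨a, ha, rfl⟩; omega
  · rintro ⟨h1, h2⟩; exact ⟨x - 1, by omega, by omega⟩

lemma bpass_of_sorted : ∀ l : List ℕ, l.Pairwise (· < ·) → bpass l = l := by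
  intro l
  induction l using bpass.induct with
  | case1 => intro _; simp [bpass]
  | case2 a => intro _; simp [bpass]
  | case3 a b l h ih =>
    intro hs
    exact absurd ((List.pairwise_cons.1 hs).1 b (List.mem_cons_self)) (by omega)
  | case4 a b l h ih =>
    intro hs
    rw [bpass, if_neg h, ih (List.pairwise_cons.1 hs).2]

lemma iter_idList (n k : ℕ) : bpass^[k] (idList n) = idList n :=
  Function.iterate_fixed (bpass_of_sorted _ (idList_sorted n)) k

/-- Key characterization. -/
lemma key (n k : ℕ) (σ : List ℕ) (hp : IsPermList n σ) :
    bpass^[k] σ = idList n ↔ ∀ x ∈ σ, fc x σ ≤ k := by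
  have hnd : σ.Nodup := hp.nodup_iff.2 (idList_nodup n)
  constructor
  · intro h x hx
    have := fc_iter k σ hnd x hx
    rw [h] at this
    have h0 := fc_of_sorted _ (idList_sorted n) x (hp.subset hx)
    omega
  · intro h
    have hs : (bpass^[k] σ).Pairwise (· < ·) := by
      refine sorted_of_fc_zero _ ((iter_perm k σ).nodup_iff.2 hnd) (fun x hx => ?_)
      have hxσ : x ∈ σ := (iter_perm k σ).mem_iff.1 hx
      have := fc_iter k σ hnd x hxσ
      have := h x hxσ
      omega
    exact List.Perm.eq_of_pairwise' (r := (· ≤ ·))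
      (hs.imp le_of_lt) ((idList_sorted n).imp le_of_lt) ((iter_perm k σ).trans hp)

/-- insert `v` at position `p` (or at the end). -/
def ins (v : ℕ) : ℕ → List ℕ → List ℕ
  | 0, l => v :: l
  | _+1, [] => [v]
  | p+1, a :: l => a :: ins v p l

lemma ins_perm (v : ℕ) : ∀ p l, (ins v p l).Perm (v :: l) := by
  intro p
  induction p with
  | zero => intro l; simp [ins]
  | succ p ih =>
    intro l
    cases l with
    | nil => simp [ins]
    | cons a t => exact ((ih t).cons a).trans (List.Perm.swap v a t)

lemma fc_ins_of_lt {v x : ℕ} (h : v < x) : ∀ p l, fc x (ins v p l) = fc x l := by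
  intro p
  induction p with
  | zero => intro l; rw [ins, fc_cons, if_neg (ne_of_lt h), if_neg (not_lt.2 h.le)]; omega
  | succ p ih =>
    intro l
    cases l with
    | nil => simp [ins, fc_cons, ne_of_lt h, not_lt.2 h.le]
    | cons a t =>
      rw [ins, fc_cons, fc_cons, ih]

lemma fc_ins_self (v : ℕ) : ∀ p l, (∀ y ∈ l, v < y) → p ≤ l.length → fc v (ins v p l) = p := by
  intro p
  induction p with
  | zero => intro l _ _; simp [ins, fc_cons]
  | succ p ih =>
    intro l hl hp
    cases l with
    | nil => simp at hp
    | cons a t =>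
      have hva : v < a := hl a (List.mem_cons_self)
      rw [ins, fc_cons, if_neg (ne_of_gt hva), if_pos hva,
        ih t (fun y hy => hl y (List.mem_cons_of_mem _ hy)) (by simpa using hp)]
      omega

lemma fc_lt_length : ∀ l : List ℕ, ∀ x ∈ l, fc x l < l.length := by
  intro l
  induction l with
  | nil => simp
  | cons a t ih =>
    intro x hx
    rcases List.mem_cons.1 hx with rfl | hx'
    · simp [fc_cons]
    · rw [fc_cons]
      by_cases hax : a = x
      · simp [hax]
      · have := ih x hx'
        simp only [if_neg hax, List.length_cons]
        split <;> omega

lemma fc_erase_of_lt {v x : ℕ} (h : v < x) : ∀ l : List ℕ, fc x (l.erase v) = fc x l := by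
  intro l
  induction l with
  | nil => simp
  | cons a t ih =>
    by_cases hav : a = v
    · subst hav
      rw [List.erase_cons_head, fc_cons, if_neg (ne_of_lt h), if_neg (not_lt.2 h.le)]
      omega
    · rw [List.erase_cons_tail (by simpa using hav), fc_cons, fc_cons, ih]

lemma erase_ins {v : ℕ} : ∀ p l, v ∉ l → (ins v p l).erase v = l := by
  intro p
  induction p with
  | zero => intro l _; simp [ins]
  | succ p ih =>
    intro l hv
    cases l with
    | nil => simp [ins]
    | cons a t =>
      have hav : a ≠ v := fun hc => hv (hc ▸ List.mem_cons_self)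
      rw [ins, List.erase_cons_tail (by simpa using hav),
        ih t (fun hc => hv (List.mem_cons_of_mem _ hc))]

lemma ins_fc_erase {x : ℕ} : ∀ l : List ℕ, x ∈ l → (∀ y ∈ l, x ≤ y) →
    ins x (fc x l) (l.erase x) = l := by
  intro l
  induction l with
  | nil => simp
  | cons a t ih =>
    intro hx hall
    by_cases hax : a = x
    · subst hax
      simp [fc_cons, ins]
    · have hxa : x < a := lt_of_le_of_ne (hall a (List.mem_cons_self)) (Ne.symm hax)
      have hxt : x ∈ t := (List.mem_cons.1 hx).resolve_left (fun hc => hax hc.symm)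
      rw [fc_cons, if_neg hax, if_pos hxa, List.erase_cons_tail (by simpa using hax),
        Nat.add_comm, ins, ih hxt (fun y hy => hall y (List.mem_cons_of_mem _ hy))]

lemma fc_map_add_one (x : ℕ) : ∀ l : List ℕ, fc (x + 1) (l.map (· + 1)) = fc x l := by
  intro l
  induction l with
  | nil => rfl
  | cons a t ih =>
    simp only [List.map_cons, fc_cons, ih]
    by_cases hax : a = x
    · simp [hax]
    · rw [if_neg (by omega), if_neg hax]
      congr 1
      by_cases h : x < a
      · rw [if_pos h, if_pos (by omega)]
      · rw [if_neg h, if_neg (by omega)]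

lemma map_sub_map_add : ∀ l : List ℕ, (∀ y ∈ l, 1 ≤ y) → (l.map (· - 1)).map (· + 1) = l := by
  intro l
  induction l with
  | nil => simp
  | cons a t ih =>
    intro h
    have h1 := h a (List.mem_cons_self)
    simp only [List.map_cons, ih (fun y hy => h y (List.mem_cons_of_mem _ hy))]
    congr 1
    omega

lemma map_add_map_sub (l : List ℕ) : (l.map (· + 1)).map (· - 1) = l := by
  rw [List.map_map, show ((· - 1) ∘ (· + 1)) = (id : ℕ → ℕ) from funext fun x => by simp,
    List.map_id]

lemma idList_succ (n : ℕ) : idList (n + 1) = 1 :: (idList n).map (· + 1) := by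
  simp [idList, List.range_succ_eq_map, List.map_map]

/-- the finset of permutation words of size n sorted by ≤ k passes. -/
def Sf (n k : ℕ) : Finset (List ℕ) :=
  ((idList n).permutations.toFinset).filter (fun l => ∀ x ∈ l, fc x l ≤ k)

lemma mem_Sf {n k : ℕ} {σ : List ℕ} :
    σ ∈ Sf n k ↔ σ.Perm (idList n) ∧ ∀ x ∈ σ, fc x σ ≤ k := by
  simp [Sf, List.mem_permutations]

lemma card_Sf : ∀ n k, (Sf n k).card = ∏ i ∈ Finset.range n, min (i + 1) (k + 1) := by
  intro n
  induction n with
  | zero =>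
    intro k
    have h : Sf 0 k = {([] : List ℕ)} := by
      ext σ
      simp only [mem_Sf, Finset.mem_singleton]
      constructor
      · rintro ⟨hp, _⟩
        simpa [idList] using hp
      · rintro rfl
        simp [idList]
    simp [h]
  | succ n ih =>
    intro k
    have hcard : (Finset.range (min (n + 1) (k + 1)) ×ˢ Sf n k).card = (Sf (n + 1) k).card := by
      apply Finset.card_bij' (fun pτ _ => ins 1 pτ.1 (pτ.2.map (· + 1)))
        (fun σ _ => (fc 1 σ, (σ.erase 1).map (· - 1)))
      · -- forward membership
        rintro ⟨p, τ⟩ hmem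
        rw [Finset.mem_product, Finset.mem_range] at hmem
        obtain ⟨hp, hτ⟩ := hmem
        rw [mem_Sf] at hτ ⊢
        obtain ⟨hperm, hfc⟩ := hτ
        have hlen : τ.length = n := by
          have := hperm.length_eq; rwa [idList_len] at this
        have hm2 : ∀ y ∈ τ.map (· + 1), 1 < y := by
          intro y hy
          obtain ⟨z, hz, rfl⟩ := List.mem_map.1 hy
          have := (mem_idList.1 (hperm.subset hz)).1
          omega
        constructor
        · refine (ins_perm _ _ _).trans ?_
          rw [idList_succ]
          exact (hperm.map _).cons 1
        · intro x hx
          have hx' := (ins_perm _ _ _).subset hx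
          rcases List.mem_cons.1 hx' with rfl | hx''
          · rw [fc_ins_self 1 p _ hm2 (by rw [List.length_map, hlen]; omega)]
            omega
          · obtain ⟨z, hz, rfl⟩ := List.mem_map.1 hx''
            rw [fc_ins_of_lt (by have := (mem_idList.1 (hperm.subset hz)).1; omega),
              fc_map_add_one]
            exact hfc z hz
      · -- backward membership
        intro σ hσ
        rw [mem_Sf] at hσ
        obtain ⟨hperm, hfc⟩ := hσ
        have h1σ : (1 : ℕ) ∈ σ := hperm.mem_iff.2 (mem_idList.2 ⟨le_refl 1, by omega⟩)
        have hlen : σ.length = n + 1 := by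
          have := hperm.length_eq; rwa [idList_len] at this
        have herase : (σ.erase 1).Perm ((idList n).map (· + 1)) := by
          have := hperm.erase 1
          rwa [idList_succ, List.erase_cons_head] at this
        have hmap : ((σ.erase 1).map (· - 1)).map (· + 1) = σ.erase 1 := by
          apply map_sub_map_add
          intro z hz
          obtain ⟨w, hw, rfl⟩ := List.mem_map.1 (herase.subset hz)
          have := (mem_idList.1 hw).1
          omega
        rw [Finset.mem_product, Finset.mem_range, mem_Sf]
        refine ⟨lt_min ?_ ?_, ?_, ?_⟩
        · have := fc_lt_length σ 1 h1σ; omega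
        · have := hfc 1 h1σ; omega
        · refine (herase.map (· - 1)).trans ?_
          rw [map_add_map_sub]
        · intro x hx
          obtain ⟨y, hy, rfl⟩ := List.mem_map.1 hx
          have hy2 : 2 ≤ y := by
            obtain ⟨z, hz, rfl⟩ := List.mem_map.1 (herase.subset hy)
            have := (mem_idList.1 hz).1
            omega
          have hyσ : y ∈ σ := List.mem_of_mem_erase hy
          calc fc (y - 1) ((σ.erase 1).map (· - 1))
              = fc (y - 1 + 1) (((σ.erase 1).map (· - 1)).map (· + 1)) :=
                (fc_map_add_one _ _).symm
            _ = fc y (σ.erase 1) := by rw [hmap, show y - 1 + 1 = y by omega]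
            _ = fc y σ := fc_erase_of_lt (by omega) σ
            _ ≤ k := hfc y hyσ
      · -- left inverse
        rintro ⟨p, τ⟩ hmem
        rw [Finset.mem_product, Finset.mem_range] at hmem
        obtain ⟨hp, hτ⟩ := hmem
        rw [mem_Sf] at hτ
        obtain ⟨hperm, hfc⟩ := hτ
        have hlen : τ.length = n := by
          have := hperm.length_eq; rwa [idList_len] at this
        have hm2 : ∀ y ∈ τ.map (· + 1), 1 < y := by
          intro y hy
          obtain ⟨z, hz, rfl⟩ := List.mem_map.1 hy
          have := (mem_idList.1 (hperm.subset hz)).1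
          omega
        have h1 : fc 1 (ins 1 p (τ.map (· + 1))) = p :=
          fc_ins_self 1 p _ hm2 (by rw [List.length_map, hlen]; omega)
        have h2 : (ins 1 p (τ.map (· + 1))).erase 1 = τ.map (· + 1) :=
          erase_ins p _ (fun hc => by have := hm2 1 hc; omega)
        simp only [h1, h2, map_add_map_sub]
      · -- right inverse
        intro σ hσ
        rw [mem_Sf] at hσ
        obtain ⟨hperm, hfc⟩ := hσ
        have h1σ : (1 : ℕ) ∈ σ := hperm.mem_iff.2 (mem_idList.2 ⟨le_refl 1, by omega⟩)
        have herase : (σ.erase 1).Perm ((idList n).map (· + 1)) := by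
          have := hperm.erase 1
          rwa [idList_succ, List.erase_cons_head] at this
        have hmap : ((σ.erase 1).map (· - 1)).map (· + 1) = σ.erase 1 := by
          apply map_sub_map_add
          intro z hz
          obtain ⟨w, hw, rfl⟩ := List.mem_map.1 (herase.subset hz)
          have := (mem_idList.1 hw).1
          omega
        simp only [hmap]
        exact ins_fc_erase σ h1σ (fun y hy => (mem_idList.1 (hperm.subset hy)).1)
    rw [← hcard, Finset.card_product, Finset.card_range, ih k, Finset.prod_range_succ,
      Nat.mul_comm]

lemma prod_min (n k : ℕ) (h : k + 1 ≤ n) :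
    ∏ i ∈ Finset.range n, min (i + 1) (k + 1) = (k + 1) ^ (n - k - 1) * (k + 1).factorial := by
  have hn : n = (k + 1) + (n - k - 1) := by omega
  rw [hn, Finset.prod_range_add]
  have h1 : ∏ i ∈ Finset.range (k + 1), min (i + 1) (k + 1) = (k + 1).factorial := by
    rw [← Finset.prod_range_add_one_eq_factorial]
    exact Finset.prod_congr rfl (fun i hi => by rw [Finset.mem_range] at hi; omega)
  have h2 : ∏ i ∈ Finset.range (n - k - 1), min ((k + 1) + i + 1) (k + 1)
      = (k + 1) ^ (n - k - 1) := by
    rw [Finset.prod_congr rfl (fun i _ => (by omega : min ((k + 1) + i + 1) (k + 1) = k + 1)),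
      Finset.prod_const, Finset.card_range]
  rw [h1, h2, Nat.mul_comm]
  have he : k + 1 + (n - k - 1) - k - 1 = n - k - 1 := by omega
  rw [he]

/-- For `0 ≤ k ≤ n-1`: the number of permutations of size `n` sorted by at most `k`
passes of bubblesort is `(k+1)^(n-k-1)·(k+1)!`, and the number requiring exactly `k`
passes is `k!·((k+1)^(n-k) − k^(n-k))`. -/
theorem stmt_14 (n k : ℕ) (hn : 1 ≤ n) (hk : k ≤ n - 1) :
    Set.ncard {σ : List ℕ | IsPermList n σ ∧ bpass^[k] σ = idList n} =
      (k + 1) ^ (n - k - 1) * Nat.factorial (k + 1) ∧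
    Set.ncard {σ : List ℕ | IsNodeAt n (idList n) σ k} =
      Nat.factorial k * ((k + 1) ^ (n - k) - k ^ (n - k)) := by
  have hc : ∀ m, m + 1 ≤ n → (Sf n m).card = (m + 1) ^ (n - m - 1) * (m + 1).factorial :=
    fun m hm => by rw [card_Sf, prod_min n m hm]
  have hset : ∀ m, {σ : List ℕ | IsPermList n σ ∧ bpass^[m] σ = idList n} = ↑(Sf n m) := by
    intro m; ext σ
    simp only [Set.mem_setOf_eq, Finset.mem_coe, mem_Sf]
    exact ⟨fun ⟨hp, h⟩ => ⟨hp, (key n m σ hp).1 h⟩, fun ⟨hp, h⟩ => ⟨hp, (key n m σ hp).2 h⟩⟩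
  constructor
  · rw [hset k, Set.ncard_coe_finset, hc k (by omega)]
  · cases k with
    | zero =>
      have hone : {σ : List ℕ | IsNodeAt n (idList n) σ 0} = {idList n} := by
        ext σ
        simp only [IsNodeAt, Set.mem_setOf_eq, Set.mem_singleton_iff]
        constructor
        · rintro ⟨_, h, _⟩; simpa using h
        · rintro rfl; exact ⟨List.Perm.refl _, rfl, fun i hi => absurd hi (by omega)⟩
      rw [hone, Set.ncard_singleton]
      have h0 : (0 : ℕ) ^ n = 0 := Nat.zero_pow (by omega)
      simp [h0]
    | succ j =>
      have hsub : Sf n j ⊆ Sf n (j + 1) := by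
        intro σ hσ; rw [mem_Sf] at hσ ⊢
        exact ⟨hσ.1, fun x hx => (hσ.2 x hx).trans (by omega)⟩
      have hseteq : {σ : List ℕ | IsNodeAt n (idList n) σ (j + 1)}
          = ↑(Sf n (j + 1) \ Sf n j) := by
        ext σ
        simp only [IsNodeAt, Set.mem_setOf_eq, Finset.coe_sdiff, Set.mem_diff,
          Finset.mem_coe, mem_Sf]
        constructor
        · rintro ⟨hp, h, hlt⟩
          refine ⟨⟨hp, (key n (j + 1) σ hp).1 h⟩, fun hmem => ?_⟩
          exact hlt j (by omega) ((key n j σ hp).2 hmem.2)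
        · rintro ⟨⟨hp, h⟩, hnot⟩
          refine ⟨hp, (key n (j + 1) σ hp).2 h, fun i hi hid => ?_⟩
          apply hnot
          refine ⟨hp, (key n j σ hp).1 ?_⟩
          have hji : j = (j - i) + i := by omega
          rw [hji, Function.iterate_add_apply, hid, iter_idList]
      rw [hseteq, Set.ncard_coe_finset, Finset.card_sdiff_of_subset hsub, hc (j + 1) (by omega),
        hc j (by omega)]
      obtain ⟨m, hm⟩ : ∃ m, n - (j + 1) = m + 1 := ⟨n - (j + 1) - 1, by omega⟩
      have hnj : n - j - 1 = m + 1 := by omega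
      rw [hm, hnj, Nat.add_sub_cancel, Nat.factorial_succ (j + 1), Nat.mul_sub,
        pow_succ, pow_succ]
      ring_nf
end

section
/- Let π be a permutation of size n, different from the identity, with k left-to-right maxima in total and whose longest suffix of left-to-right maxima has length m. Then for every 0 ≤ j ≤ m, the number of permutations σ at height j in the tree T(π) of iterated bubblesort preimages (i.e., with B^j(σ) = π and B^(j−1)(σ) ≠ π for j ≥ 1) is j!·(j+1)^(k−j). In particular, the total number of nodes of T(π) is ∑_{j=0}^{m} j!·(j+1)^(k−j). -/
namespace St17
open List

def G : ℕ → List ℕ → ℕ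
  | _, [] => 0
  | a, b :: l => (if a < b then 1 else 0) + G (max a b) l

def F : ℕ → List ℕ → ℕ
  | _, [] => 0
  | a, b :: l => if F (max a b) l = l.length ∧ a < b then l.length + 1 else F (max a b) l

def ltrS : ℕ → List ℕ → Finset ℕ
  | _, [] => ∅
  | a, b :: l => (if a < b then {b} else ∅) ∪ ltrS (max a b) l

def seval : List (ℕ × List ℕ) → List ℕ
  | [] => []
  | p :: D => p.1 :: (p.2 ++ seval D)

def beval : List (ℕ × List ℕ) → List ℕ
  | [] => []
  | p :: D => p.2 ++ p.1 :: beval D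

def ValidF : ℕ → List (ℕ × List ℕ) → Prop
  | _, [] => True
  | a, p :: D => a < p.1 ∧ (∀ x ∈ p.2, x < p.1) ∧ ValidF p.1 D

def eD : List (ℕ × List ℕ) → ℕ
  | [] => 0
  | p :: D => if eD D = D.length ∧ p.2 = [] then D.length + 1 else eD D

def bsplit (C : Finset ℕ) : List ℕ → List (ℕ × List ℕ)
  | [] => []
  | x :: l =>
    if x ∈ C then (x, []) :: bsplit C l
    else
      match bsplit C l with
      | [] => []
      | (c, A) :: D => (c, x :: A) :: D

def decomp : List ℕ → List (ℕ × List ℕ)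
  | [] => []
  | a :: l => (a, l.takeWhile (· < a)) :: decomp (l.dropWhile (· < a))
  termination_by l => l.length
  decreasing_by
    simp only [List.length_cons]
    exact Nat.lt_succ_of_le (List.Sublist.length_le (List.dropWhile_sublist _))

lemma F_le_length : ∀ (l : List ℕ) (a), F a l ≤ l.length := by
  intro l
  induction l with
  | nil => intro a; simp [F]
  | cons b l ih => intro a; have := ih (max a b); simp only [F, length_cons]; split <;> omega

lemma eD_le_length : ∀ (D : List (ℕ × List ℕ)), eD D ≤ D.length := by
  intro D
  induction D with
  | nil => simp [eD]
  | cons p D ih => simp only [eD, length_cons]; split <;> omega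

lemma G_skip {c : ℕ} : ∀ (A w : List ℕ), (∀ x ∈ A, x < c) → G c (A ++ w) = G c w := by
  intro A
  induction A with
  | nil => simp
  | cons x A ih =>
    intro w h
    have hx : x < c := h x (by simp)
    simp only [cons_append, G, if_neg (by omega : ¬ c < x), Nat.max_eq_left hx.le, zero_add]
    exact ih w fun y hy => h y (by simp [hy])

lemma F_skip {c : ℕ} : ∀ (A w : List ℕ), (∀ x ∈ A, x < c) → F c (A ++ w) = F c w := by
  intro A
  induction A with
  | nil => simp
  | cons x A ih =>
    intro w h
    have hx : x < c := h x (by simp)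
    simp only [cons_append, F, Nat.max_eq_left hx.le]
    rw [if_neg (by omega)]
    exact ih w fun y hy => h y (by simp [hy])

lemma G_seval : ∀ (D : List (ℕ × List ℕ)) (a), ValidF a D → G a (seval D) = D.length := by
  intro D
  induction D with
  | nil => intro a _; simp [seval, G]
  | cons p D ih =>
    intro a hv
    obtain ⟨h1, h2, h3⟩ := hv
    simp only [seval, G, if_pos h1, Nat.max_eq_right h1.le, length_cons]
    rw [G_skip _ _ h2, ih _ h3]
    omega

lemma length_le_seval : ∀ (D : List (ℕ × List ℕ)), D.length ≤ (seval D).length := by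
  intro D
  induction D with
  | nil => simp [seval]
  | cons p D ih => simp only [seval, length_cons, length_append]; omega

lemma eD_eq_length_iff : ∀ (D : List (ℕ × List ℕ)), eD D = D.length ↔ ∀ p ∈ D, p.2 = [] := by
  intro D
  induction D with
  | nil => simp [eD]
  | cons p D ih =>
    have := eD_le_length D
    simp only [eD, length_cons]
    constructor
    · intro h
      split at h
      · rename_i hc
        intro q hq
        rcases (List.mem_cons).1 hq with rfl | hq
        · exact hc.2
        · exact ih.1 hc.1 q hq
      · omega
    · intro h
      have h1 : eD D = D.length := ih.2 fun q hq => h q (by simp [hq])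
      rw [if_pos ⟨h1, h p (by simp)⟩]

lemma seval_allEmpty : ∀ (D : List (ℕ × List ℕ)), (∀ p ∈ D, p.2 = []) → seval D = D.map Prod.fst := by
  intro D
  induction D with
  | nil => simp [seval]
  | cons p D ih =>
    intro h
    have := h p (by simp)
    simp only [seval, this, map_cons, nil_append]
    rw [ih fun q hq => h q (by simp [hq])]

lemma beval_allEmpty : ∀ (D : List (ℕ × List ℕ)), (∀ p ∈ D, p.2 = []) → beval D = D.map Prod.fst := by
  intro D
  induction D with
  | nil => simp [beval]
  | cons p D ih =>
    intro h
    have := h p (by simp)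
    simp only [beval, this, map_cons, nil_append]
    rw [ih fun q hq => h q (by simp [hq])]

lemma F_seval : ∀ (D : List (ℕ × List ℕ)) (a), ValidF a D →
    F a (seval D) = if eD D = D.length then (seval D).length else eD D := by
  intro D
  induction D with
  | nil => intro a _; simp [seval, F, eD]
  | cons p D ih =>
    intro a hv
    obtain ⟨c, A⟩ := p
    obtain ⟨h1, h2, h3⟩ := hv
    simp only at h1 h2 h3
    have hFs : F c (A ++ seval D) = F c (seval D) := F_skip _ _ h2
    have hIH := ih c h3
    have hle := eD_le_length D
    have hlen := length_le_seval D
    have hL : F a (seval ((c, A) :: D)) =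
        if F c (seval D) = A.length + (seval D).length ∧ a < c
        then A.length + (seval D).length + 1 else F c (seval D) := by
      show F a (c :: (A ++ seval D)) = _
      simp only [F, Nat.max_eq_right h1.le, length_append, hFs]
    have hsevlen : (seval ((c, A) :: D)).length = A.length + (seval D).length + 1 := by
      show (c :: (A ++ seval D)).length = _
      simp only [length_cons, length_append]
    have heDc : eD ((c, A) :: D) = if eD D = D.length ∧ A = [] then D.length + 1 else eD D := rfl
    rw [hL, heDc, hsevlen, length_cons]
    by_cases hD : eD D = D.length
    · have hall := (eD_eq_length_iff D).1 hD
      have hsl : (seval D).length = D.length := by rw [seval_allEmpty D hall]; simp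
      rw [if_pos hD] at hIH
      by_cases hA : A = []
      · subst hA
        rw [if_pos (show eD D = D.length ∧ ([] : List ℕ) = [] from ⟨hD, rfl⟩)]
        rw [if_pos (show F c (seval D) = ([] : List ℕ).length + (seval D).length ∧ a < c from
          ⟨by simpa using hIH, h1⟩)]
        rw [if_pos (show (D.length + 1 : ℕ) = D.length + 1 from rfl)]
      · have hAl : 0 < A.length := List.length_pos_iff.2 hA
        rw [if_neg (show ¬(eD D = D.length ∧ A = []) from fun h => hA h.2)]
        rw [if_neg (show ¬(eD D = D.length + 1) by omega)]
        rw [if_neg (show ¬(F c (seval D) = A.length + (seval D).length ∧ a < c) from by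
          simp only [hIH]; omega)]
        rw [hIH, hsl, hD]
    · rw [if_neg hD] at hIH
      rw [if_neg (show ¬(eD D = D.length ∧ A = []) from fun h => hD h.1)]
      rw [if_neg (show ¬(eD D = D.length + 1) by omega)]
      rw [if_neg (show ¬(F c (seval D) = A.length + (seval D).length ∧ a < c) from by
        simp only [hIH]; omega)]
      exact hIH

lemma F_anti : ∀ (l : List ℕ) (a a'), a ≤ a' → F a' l ≤ F a l := by
  intro l
  induction l with
  | nil => intro a a' _; simp [F]
  | cons b l ih =>
    intro a a' h
    have ht := ih (max a b) (max a' b) (by omega)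
    have h1 := F_le_length l (max a b)
    have h2 := F_le_length l (max a' b)
    simp only [F, length_cons]
    split_ifs <;> omega

lemma F_cons_ge : ∀ (l : List ℕ) (a b), F (max a b) l ≤ F a (b :: l) := by
  intro l a b
  have := F_le_length l (max a b)
  simp only [F]
  split_ifs <;> omega

lemma F_chain : ∀ (l : List ℕ) (a), List.Chain' (· < ·) (a :: l) → F a l = l.length := by
  intro l
  induction l with
  | nil => intro a _; simp [F]
  | cons b l ih =>
    intro a h
    replace h := List.isChain_cons_cons.1 h
    obtain ⟨hab, h2⟩ := h
    simp only [F, Nat.max_eq_right hab.le, length_cons]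
    rw [if_pos ⟨ih b h2, hab⟩]

lemma F_full_chain : ∀ (l : List ℕ) (a), F a l = l.length → List.Chain' (· < ·) (a :: l) := by
  intro l
  induction l with
  | nil => intro a _; exact List.isChain_singleton a
  | cons b l ih =>
    intro a h
    simp only [F, length_cons] at h
    have h1 := F_le_length l (max a b)
    split_ifs at h with hc
    · obtain ⟨hF, hab⟩ := hc
      rw [Nat.max_eq_right hab.le] at hF
      exact List.isChain_cons_cons.2 ⟨hab, ih b hF⟩
    · omega

lemma validF_chain : ∀ (D : List (ℕ × List ℕ)) (a), ValidF a D →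
    List.Chain' (· < ·) (a :: D.map Prod.fst) := by
  intro D
  induction D with
  | nil => intro a _; exact List.isChain_singleton a
  | cons p D ih =>
    intro a hv
    obtain ⟨h1, _, h3⟩ := hv
    exact List.isChain_cons_cons.2 ⟨h1, ih p.1 h3⟩

lemma F_helper_A : ∀ (u : List ℕ) (a c w), (∀ x ∈ u, x < c) → a < c →
    List.Chain' (· < ·) (c :: w) → w.length + 1 ≤ F a (u ++ c :: w) := by
  intro u
  induction u with
  | nil =>
    intro a c w _ hac hch
    simp only [nil_append, F, Nat.max_eq_right hac.le, length_cons]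
    rw [if_pos ⟨F_chain w c hch, hac⟩]
  | cons x u ih =>
    intro a c w hu hac hch
    have hx : x < c := hu x (by simp)
    calc w.length + 1 ≤ F (max a x) (u ++ c :: w) :=
          ih (max a x) c w (fun y hy => hu y (by simp [hy])) (by omega) hch
      _ ≤ F a (x :: (u ++ c :: w)) := F_cons_ge _ a x
  
lemma F_helper_B : ∀ (u : List ℕ) (a c w), (∀ x ∈ u, x < c) → a < c →
    F c w ≤ F a (u ++ c :: w) := by
  intro u
  induction u with
  | nil =>
    intro a c w _ hac
    calc F c w = F (max a c) w := by rw [Nat.max_eq_right hac.le]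
      _ ≤ F a (c :: w) := F_cons_ge _ a c
  | cons x u ih =>
    intro a c w hu hac
    have hx : x < c := hu x (by simp)
    calc F c w ≤ F (max a x) (u ++ c :: w) :=
          ih (max a x) c w (fun y hy => hu y (by simp [hy])) (by omega)
      _ ≤ F a (x :: (u ++ c :: w)) := F_cons_ge _ a x

lemma F_beval_ge : ∀ (D : List (ℕ × List ℕ)) (a), ValidF a D → eD D ≠ D.length →
    eD D + 1 ≤ F a (beval D) := by
  intro D
  induction D with
  | nil => intro a _ h; simp [eD] at h
  | cons p D ih =>
    intro a hv hne
    obtain ⟨c, A⟩ := p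
    obtain ⟨h1, h2, h3⟩ := hv
    simp only at h1 h2 h3
    simp only [beval]
    by_cases hD : eD D = D.length
    · have hall : ∀ q ∈ D, q.2 = [] := (eD_eq_length_iff D).1 hD
      have hbev : beval D = D.map Prod.fst := beval_allEmpty D hall
      have hA : A ≠ [] := by
        intro hA
        exact hne (by simp [eD, hD, hA])
      have heD : eD ((c, A) :: D) = D.length := by
        simp only [eD]
        rw [if_neg (by simp [hA]), hD]
      rw [heD, hbev]
      have := F_helper_A A a c (D.map Prod.fst) h2 h1 (validF_chain D c h3)
      simpa using this
    · have heD : eD ((c, A) :: D) = eD D := by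
        simp only [eD]
        rw [if_neg (by simp [hD])]
      rw [heD]
      calc eD D + 1 ≤ F c (beval D) := ih c h3 hD
        _ ≤ F a (A ++ c :: beval D) := F_helper_B A a c (beval D) h2 h1

lemma mem_ltrS : ∀ (l : List ℕ) (a x), x ∈ ltrS a l → a < x ∧ x ∈ l := by
  intro l
  induction l with
  | nil => intro a x h; simp [ltrS] at h
  | cons b l ih =>
    intro a x h
    simp only [ltrS, Finset.mem_union] at h
    rcases h with h | h
    · split_ifs at h with hab
      · simp only [Finset.mem_singleton] at h
        subst h
        exact ⟨hab, by simp⟩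
      · simp at h
    · obtain ⟨h1, h2⟩ := ih (max a b) x h
      exact ⟨by omega, by simp [h2]⟩

lemma ltrS_cons_sub (a b : ℕ) (l : List ℕ) : ltrS (max a b) l ⊆ ltrS a (b :: l) := by
  simp only [ltrS]
  exact Finset.subset_union_right

lemma mem_ltrS_cons {a b : ℕ} {l : List ℕ} {x : ℕ} (hnd : (b :: l).Nodup)
    (hx : x ∈ ltrS a (b :: l)) (hxl : x ∈ l) : x ∈ ltrS (max a b) l := by
  simp only [ltrS, Finset.mem_union] at hx
  rcases hx with h | h
  · split_ifs at h with hab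
    · simp only [Finset.mem_singleton] at h
      subst h
      exact absurd hxl (by simp at hnd; tauto)
    · simp at h
  · exact h

lemma le_foldl_max : ∀ (u : List ℕ) (a), a ≤ u.foldl max a := by
  intro u
  induction u with
  | nil => intro a; simp
  | cons x u ih =>
    intro a
    calc a ≤ max a x := le_max_left _ _
      _ ≤ (x :: u).foldl max a := by simpa [List.foldl_cons] using ih (max a x)

lemma mem_le_foldl_max : ∀ (u : List ℕ) (a y), y ∈ u → y ≤ u.foldl max a := by
  intro u
  induction u with
  | nil => intro a y h; simp at h
  | cons x u ih =>
    intro a y h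
    simp only [List.foldl_cons]
    rcases List.mem_cons.1 h with rfl | h
    · calc y ≤ max a y := le_max_right _ _
        _ ≤ _ := le_foldl_max u (max a y)
    · exact ih (max a x) y h

lemma foldl_max_le : ∀ (u : List ℕ) (a c), a ≤ c → (∀ x ∈ u, x ≤ c) → u.foldl max a ≤ c := by
  intro u
  induction u with
  | nil => intro a c h _; simpa using h
  | cons x u ih =>
    intro a c h hu
    simp only [List.foldl_cons]
    exact ih (max a x) c (max_le h (hu x (by simp))) fun y hy => hu y (by simp [hy])

lemma mem_ltrS_suffix : ∀ (u : List ℕ) (v a x), (u ++ v).Nodup → x ∈ ltrS a (u ++ v) → x ∈ v →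
    x ∈ ltrS (u.foldl max a) v := by
  intro u
  induction u with
  | nil => intro v a x _ h _; simpa using h
  | cons y u ih =>
    intro v a x hnd h hv
    simp only [List.foldl_cons]
    refine ih v (max a y) x (by simpa using hnd.of_cons) ?_ hv
    exact mem_ltrS_cons hnd h (by simp [hv])

lemma ltrS_suffix_sub : ∀ (u : List ℕ) (v a), ltrS (u.foldl max a) v ⊆ ltrS a (u ++ v) := by
  intro u
  induction u with
  | nil => intro v a; simp
  | cons y u ih =>
    intro v a
    calc ltrS ((y :: u).foldl max a) v = ltrS (u.foldl max (max a y)) v := by simp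
      _ ⊆ ltrS (max a y) (u ++ v) := ih v (max a y)
      _ ⊆ ltrS a (y :: (u ++ v)) := ltrS_cons_sub a y (u ++ v)

lemma mem_ltrS_intro : ∀ (A : List ℕ) (a c w), (∀ x ∈ A, x < c) → a < c →
    c ∈ ltrS a (A ++ c :: w) := by
  intro A
  induction A with
  | nil =>
    intro a c w _ hac
    simp [ltrS, Finset.mem_union, if_pos hac]
  | cons x A ih =>
    intro a c w hA hac
    have hx : x < c := hA x (by simp)
    exact ltrS_cons_sub a x _ (ih (max a x) c w (fun y hy => hA y (by simp [hy])) (by omega))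

lemma ltr_gt_before : ∀ (u : List ℕ) (v a x), (u ++ x :: v).Nodup →
    x ∈ ltrS a (u ++ x :: v) → ∀ y ∈ u, y < x := by
  intro u v a x hnd h y hy
  have hx : x ∈ ltrS (u.foldl max a) (x :: v) :=
    mem_ltrS_suffix u (x :: v) a x hnd h (by simp)
  simp only [ltrS, Finset.mem_union] at hx
  rcases hx with h' | h'
  · split_ifs at h' with hfa
    · have := mem_le_foldl_max u a y hy
      omega
    · simp at h'
  · have := (mem_ltrS _ _ _ h').2
    have hxv : x ∉ v := by
      have := hnd.of_append_right
      simp at this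
      tauto
    exact absurd this hxv

lemma ltrS_card : ∀ (l : List ℕ) (a), l.Nodup → (ltrS a l).card = G a l := by
  intro l
  induction l with
  | nil => intro a _; simp [ltrS, G]
  | cons b l ih =>
    intro a hnd
    have hbl : b ∉ l := by simp at hnd; tauto
    simp only [ltrS, G]
    split_ifs with hab
    · rw [← Finset.insert_eq, Finset.card_insert_of_notMem (fun h => hbl (mem_ltrS _ _ _ h).2)]
      rw [ih (max a b) hnd.of_cons]
      omega
    · simp [ih (max a b) hnd.of_cons]

lemma F_full_mem : ∀ (l : List ℕ) (a), F a l = l.length → ∀ x ∈ l, x ∈ ltrS a l := by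
  intro l
  induction l with
  | nil => intro a _ x h; simp at h
  | cons b l ih =>
    intro a h x hx
    simp only [F, length_cons] at h
    have h1 := F_le_length l (max a b)
    split_ifs at h with hc
    · obtain ⟨hF, hab⟩ := hc
      rcases List.mem_cons.1 hx with rfl | hx
      · simp [ltrS, Finset.mem_union, if_pos hab]
      · exact ltrS_cons_sub a b l (ih (max a b) hF x hx)
    · omega

lemma drop_mem_ltrS : ∀ (l : List ℕ) (a t), t ≤ F a l →
    ∀ x ∈ l.drop (l.length - t), x ∈ ltrS a l := by
  intro l
  induction l with
  | nil => intro a t _ x hx; simp at hx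
  | cons b l ih =>
    intro a t ht x hx
    have hFle := F_le_length l (max a b)
    simp only [F, length_cons] at ht
    simp only [List.length_cons] at hx
    by_cases htL : t ≤ l.length
    · have hdrop : (b :: l).drop (l.length + 1 - t) = l.drop (l.length - t) := by
        have : l.length + 1 - t = (l.length - t) + 1 := by omega
        rw [this, List.drop_succ_cons]
      rw [hdrop] at hx
      have htF : t ≤ F (max a b) l := by split_ifs at ht <;> omega
      exact ltrS_cons_sub a b l (ih (max a b) t htF x hx)
    · have hcond : F (max a b) l = l.length ∧ a < b := by
        by_contra hc
        rw [if_neg hc] at ht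
        omega
      have : l.length + 1 - t = 0 := by omega
      rw [this, List.drop_zero] at hx
      rcases List.mem_cons.1 hx with rfl | hx
      · simp [ltrS, Finset.mem_union, if_pos hcond.2]
      · exact ltrS_cons_sub a b l (F_full_mem l (max a b) hcond.1 x hx)

lemma head?_mem : ∀ (l : List ℕ) (x), l.head? = some x → x ∈ l := by
  intro l x h
  cases l with
  | nil => simp at h
  | cons b l => simp at h; simp [h]

lemma length_le_beval : ∀ (D : List (ℕ × List ℕ)), D.length ≤ (beval D).length := by
  intro D
  induction D with
  | nil => simp [beval]
  | cons p D ih => simp only [beval, length_cons, length_append, length_cons]; omega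

lemma bpass_perm : ∀ (l : List ℕ), (bpass l).Perm l
  | [] => by simp [bpass]
  | [a] => by simp [bpass]
  | a :: b :: l => by
    simp only [bpass]
    split
    · exact ((bpass_perm (a :: l)).cons b).trans (List.Perm.swap a b l)
    · exact (bpass_perm (b :: l)).cons a
  termination_by l => l.length
  decreasing_by all_goals (simp only [List.length_cons]; omega)

lemma bpass_dom {c : ℕ} : ∀ (A r : List ℕ), (∀ x ∈ A, x < c) →
    bpass (c :: (A ++ r)) = A ++ bpass (c :: r)
  | [], r, _ => by simp
  | x :: A, r, h => by
    have hx : x < c := h x (by simp)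
    show bpass (c :: x :: (A ++ r)) = _
    simp only [bpass, if_pos hx]
    rw [bpass_dom A r (fun y hy => h y (by simp [hy]))]
    simp

lemma bpass_seval : ∀ (D : List (ℕ × List ℕ)) (a), ValidF a D → bpass (seval D) = beval D := by
  intro D
  induction D with
  | nil => intro a _; simp [seval, beval, bpass]
  | cons p D ih =>
    intro a hv
    obtain ⟨c, A⟩ := p
    obtain ⟨h1, h2, h3⟩ := hv
    simp only at h1 h2 h3
    show bpass (c :: (A ++ seval D)) = A ++ c :: beval D
    rw [bpass_dom A (seval D) h2]
    congr 1
    cases D with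
    | nil => simp [seval, beval, bpass]
    | cons q D' =>
      obtain ⟨c2, A2⟩ := q
      have hc2 : c < c2 := h3.1
      show bpass (c :: c2 :: (A2 ++ seval D')) = c :: beval ((c2, A2) :: D')
      simp only [bpass, if_neg (by omega : ¬ c2 < c)]
      have := ih c h3
      rw [show bpass (c2 :: (A2 ++ seval D')) = bpass (seval ((c2, A2) :: D')) from rfl, this]

lemma bpass_chain : ∀ (l : List ℕ), List.Chain' (· ≤ ·) l → bpass l = l
  | [], _ => by simp [bpass]
  | [a], _ => by simp [bpass]
  | a :: b :: l, h => by
    have hab : a ≤ b := (List.isChain_cons_cons.1 h).1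
    simp only [bpass, if_neg (by omega : ¬ b < a)]
    rw [bpass_chain (b :: l) (List.isChain_cons_cons.1 h).2]
  termination_by l => l.length
  decreasing_by all_goals (simp only [List.length_cons]; omega)

lemma seval_perm_beval : ∀ (D : List (ℕ × List ℕ)), (seval D).Perm (beval D) := by
  intro D
  induction D with
  | nil => simp [seval, beval]
  | cons p D ih =>
    show (p.1 :: (p.2 ++ seval D)).Perm (p.2 ++ p.1 :: beval D)
    refine List.Perm.trans ?_ List.perm_middle.symm
    exact (ih.append_left p.2).cons p.1

lemma head_dropWhile {p : ℕ → Bool} : ∀ (l : List ℕ) (y), (l.dropWhile p).head? = some y →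
    p y = false := by
  intro l
  induction l with
  | nil => intro y h; simp [List.dropWhile] at h
  | cons z l ih =>
    intro y h
    rw [List.dropWhile_cons] at h
    split_ifs at h with hz
    · exact ih y h
    · simp only [List.head?_cons, Option.some.injEq] at h
      cases h
      cases hpz : p z with
      | true => exact absurd hpz hz
      | false => rfl

lemma span_middle {p : ℕ → Bool} : ∀ (A w : List ℕ), (∀ x ∈ A, p x = true) →
    (∀ y, w.head? = some y → p y = false) →
    (A ++ w).takeWhile p = A ∧ (A ++ w).dropWhile p = w := by
  intro A
  induction A with
  | nil =>
    intro w _ hw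
    cases w with
    | nil => simp
    | cons y w' =>
      have := hw y rfl
      simp [List.takeWhile_cons, List.dropWhile_cons, this]
  | cons x A ih =>
    intro w h hw
    have hx := h x (by simp)
    obtain ⟨h1, h2⟩ := ih w (fun y hy => h y (by simp [hy])) hw
    simp [List.takeWhile_cons, List.dropWhile_cons, hx, h1, h2]

lemma seval_decomp : ∀ (l : List ℕ), seval (decomp l) = l
  | [] => by simp [decomp, seval]
  | a :: l => by
    rw [decomp]
    show a :: (l.takeWhile (· < a) ++ seval (decomp (l.dropWhile (· < a)))) = a :: l
    rw [seval_decomp (l.dropWhile (· < a))]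
    rw [List.takeWhile_append_dropWhile]
  termination_by l => l.length
  decreasing_by
    simp only [List.length_cons]
    exact Nat.lt_succ_of_le (List.Sublist.length_le (List.dropWhile_sublist _))

lemma decomp_valid : ∀ (l : List ℕ) (a), l.Nodup → (∀ x, l.head? = some x → a < x) →
    ValidF a (decomp l)
  | [], a, _, _ => by simp [decomp, ValidF]
  | b :: l, a, hnd, hh => by
    rw [decomp]
    refine ⟨hh b rfl, ?_, ?_⟩
    · intro x hx
      have := List.mem_takeWhile_imp hx
      simpa using this
    · apply decomp_valid (l.dropWhile (· < b)) b
        ((List.dropWhile_sublist _).nodup (List.nodup_cons.1 hnd).2)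
      intro y hy
      have h1 : ¬ (y < b) := by simpa using head_dropWhile l y hy
      have hyl : y ∈ l := (List.dropWhile_sublist _).subset (head?_mem _ y hy)
      have hne : y ≠ b := fun h => (List.nodup_cons.1 hnd).1 (h ▸ hyl)
      omega
  termination_by l => l.length
  decreasing_by
    simp only [List.length_cons]
    exact Nat.lt_succ_of_le (List.Sublist.length_le (List.dropWhile_sublist _))

lemma decomp_seval : ∀ (D : List (ℕ × List ℕ)) (a), ValidF a D → decomp (seval D) = D := by
  intro D
  induction D with
  | nil => intro a _; simp [seval, decomp]
  | cons p D ih =>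
    intro a hv
    obtain ⟨c, A⟩ := p
    obtain ⟨h1, h2, h3⟩ := hv
    simp only at h1 h2 h3
    show decomp (c :: (A ++ seval D)) = (c, A) :: D
    rw [decomp]
    have hhead : ∀ y, (seval D).head? = some y → (decide (y < c)) = false := by
      intro y hy
      cases D with
      | nil => simp [seval] at hy
      | cons q D' =>
        have hcq : c < q.1 := h3.1
        have : q.1 = y := by
          have : (q.1 :: (q.2 ++ seval D')).head? = some y := hy
          simpa using this
        subst this
        simp
        omega
    obtain ⟨ht, hd⟩ := span_middle A (seval D) (fun x hx => by simpa using h2 x hx) hhead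
    rw [ht, hd, ih c h3]

lemma bsplit_cons (C : Finset ℕ) (x : ℕ) (l : List ℕ) :
    bsplit C (x :: l) = if x ∈ C then (x, []) :: bsplit C l
      else match bsplit C l with
        | [] => []
        | (c, A) :: D => (c, x :: A) :: D := rfl

lemma bsplit_cons_pos {C : Finset ℕ} {x : ℕ} {l : List ℕ} (hx : x ∈ C) :
    bsplit C (x :: l) = (x, []) :: bsplit C l := by
  rw [bsplit_cons, if_pos hx]

lemma bsplit_cons_neg {C : Finset ℕ} {x : ℕ} {l : List ℕ} (hx : x ∉ C) {c : ℕ}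
    {A : List ℕ} {D : List (ℕ × List ℕ)} (hB : bsplit C l = (c, A) :: D) :
    bsplit C (x :: l) = (c, x :: A) :: D := by
  rw [bsplit_cons, if_neg hx, hB]

lemma map_fst_bsplit (C : Finset ℕ) : ∀ (l : List ℕ),
    (bsplit C l).map Prod.fst = l.filter (· ∈ C) := by
  intro l
  induction l with
  | nil => simp [bsplit]
  | cons x l ih =>
    by_cases hx : x ∈ C
    · simp only [bsplit, if_pos hx, List.map_cons, List.filter_cons]
      rw [if_pos (by simpa using hx), ih]
    · simp only [bsplit, if_neg hx, List.filter_cons]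
      rw [if_neg (by simpa using hx)]
      cases hB : bsplit C l with
      | nil => rw [hB] at ih; simpa using ih
      | cons q D =>
        obtain ⟨c, A⟩ := q
        rw [hB] at ih
        simpa using ih

lemma bsplit_mem (C : Finset ℕ) : ∀ (l : List ℕ) (c A), (c, A) ∈ bsplit C l →
    c ∈ C ∧ ∀ x ∈ A, x ∉ C := by
  intro l
  induction l with
  | nil => intro c A h; simp [bsplit] at h
  | cons x l ih =>
    intro c A h
    by_cases hx : x ∈ C
    · rw [show bsplit C (x :: l) = (x, []) :: bsplit C l from by simp only [bsplit, if_pos hx]] at h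
      rcases List.mem_cons.1 h with heq | hmem
      · injection heq with h1 h2
        subst h1; subst h2
        exact ⟨hx, by simp⟩
      · exact ih c A hmem
    · cases hB : bsplit C l with
      | nil =>
        rw [show bsplit C (x :: l) = [] from by simp only [bsplit, if_neg hx, hB]] at h
        simp at h
      | cons q D =>
        obtain ⟨c', A'⟩ := q
        rw [show bsplit C (x :: l) = (c', x :: A') :: D from by
          simp only [bsplit, if_neg hx, hB]] at h
        have hq : c' ∈ C ∧ ∀ y ∈ A', y ∉ C := ih c' A' (by rw [hB]; exact List.mem_cons_self)
        rcases List.mem_cons.1 h with heq | hmem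
        · injection heq with h1 h2
          subst h1; subst h2
          refine ⟨hq.1, ?_⟩
          intro y hy
          rcases List.mem_cons.1 hy with rfl | hy
          · exact hx
          · exact hq.2 y hy
        · exact ih c A (by rw [hB]; exact List.mem_cons_of_mem _ hmem)

lemma bsplit_ne_nil (C : Finset ℕ) : ∀ (l : List ℕ) (c), l.getLast? = some c → c ∈ C →
    bsplit C l ≠ [] := by
  intro l
  induction l with
  | nil => intro c h _; simp at h
  | cons x l ih =>
    intro c h hc
    cases l with
    | nil =>
      have hxc : x = c := by simpa using h
      subst hxc
      simp [bsplit, if_pos hc]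
    | cons y l' =>
      rw [List.getLast?_cons_cons] at h
      by_cases hx : x ∈ C
      · simp [bsplit, if_pos hx]
      · cases hB : bsplit C (y :: l') with
        | nil => exact absurd hB (ih c h hc)
        | cons q D =>
          obtain ⟨c', A'⟩ := q
          rw [bsplit_cons_neg hx hB]
          simp

lemma beval_bsplit (C : Finset ℕ) : ∀ (l : List ℕ) (c), l.getLast? = some c → c ∈ C →
    beval (bsplit C l) = l := by
  intro l
  induction l with
  | nil => intro c h _; simp at h
  | cons x l ih =>
    intro c h hc
    cases l with
    | nil =>
      have hxc : x = c := by simpa using h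
      subst hxc
      simp [bsplit, if_pos hc, beval]
    | cons y l' =>
      rw [List.getLast?_cons_cons] at h
      by_cases hx : x ∈ C
      · simp only [bsplit, if_pos hx]
        show ([] : List ℕ) ++ x :: beval (bsplit C (y :: l')) = x :: y :: l'
        rw [ih c h hc]
        simp
      · cases hB : bsplit C (y :: l') with
        | nil => exact absurd hB (bsplit_ne_nil C (y :: l') c h hc)
        | cons q D =>
          obtain ⟨c', A'⟩ := q
          rw [bsplit_cons_neg hx hB]
          have hprev : beval ((c', A') :: D) = y :: l' := by rw [← hB]; exact ih c h hc
          show (x :: A') ++ c' :: beval D = x :: y :: l'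
          have h2 : A' ++ c' :: beval D = y :: l' := hprev
          rw [List.cons_append, h2]

lemma bsplit_valid (C : Finset ℕ) : ∀ (l : List ℕ) (a), l.Nodup →
    (∀ x ∈ l, x ∈ C → x ∈ ltrS a l) → ValidF a (bsplit C l) := by
  intro l
  induction l with
  | nil => intro a _ _; simp [bsplit, ValidF]
  | cons x l ih =>
    intro a hnd hsub
    have hnd' := (List.nodup_cons.1 hnd).2
    have hxl := (List.nodup_cons.1 hnd).1
    have hsub' : ∀ y ∈ l, y ∈ C → y ∈ ltrS (max a x) l := by
      intro y hy hyC
      exact mem_ltrS_cons hnd (hsub y (by simp [hy]) hyC) hy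
    have hihv := ih (max a x) hnd' hsub'
    by_cases hx : x ∈ C
    · have hax : a < x := by
        have hmem := hsub x (by simp) hx
        simp only [ltrS, Finset.mem_union] at hmem
        rcases hmem with h' | h'
        · split_ifs at h' with hax
          · exact hax
          · simp at h'
        · exact absurd (mem_ltrS _ _ _ h').2 hxl
      simp only [bsplit, if_pos hx]
      refine ⟨hax, by simp, ?_⟩
      rw [show max a x = x from by omega] at hihv
      exact hihv
    · simp only [bsplit, if_neg hx]
      cases hB : bsplit C l with
      | nil => simp [ValidF]
      | cons q D =>
        obtain ⟨c, A⟩ := q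
        simp only [hB]
        rw [hB] at hihv
        obtain ⟨hv1, hv2, hv3⟩ := hihv
        have hac : a < c := lt_of_le_of_lt (le_max_left a x) hv1
        have hxc : x < c := lt_of_le_of_lt (le_max_right a x) hv1
        exact ⟨hac, fun z hz => (List.mem_cons.1 hz).elim (fun h => h ▸ hxc) (fun h => hv2 z h), hv3⟩

lemma fst_mem_beval : ∀ (D : List (ℕ × List ℕ)) (c), c ∈ D.map Prod.fst → c ∈ beval D := by
  intro D
  induction D with
  | nil => intro c h; simp at h
  | cons p D ih =>
    intro c h
    rw [List.map_cons] at h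
    rcases List.mem_cons.1 h with rfl | h'
    · show p.1 ∈ p.2 ++ p.1 :: beval D
      simp
    · show c ∈ p.2 ++ p.1 :: beval D
      have := ih c h'
      simp [this]

lemma getLast?_cons_ne (x : ℕ) (w : List ℕ) (hw : w ≠ []) : (x :: w).getLast? = w.getLast? := by
  cases w with
  | nil => exact absurd rfl hw
  | cons y w' => exact List.getLast?_cons_cons

lemma getLast?_append_right (u v : List ℕ) (hv : v ≠ []) : (u ++ v).getLast? = v.getLast? := by
  induction u with
  | nil => simp
  | cons x u ih =>
    rw [List.cons_append, getLast?_cons_ne x (u ++ v) (by simp [hv]), ih]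

lemma beval_getLast? : ∀ (D : List (ℕ × List ℕ)), D ≠ [] →
    (beval D).getLast? = (D.map Prod.fst).getLast? := by
  intro D
  induction D with
  | nil => intro h; simp at h
  | cons p D ih =>
    intro _
    cases D with
    | nil =>
      show (p.2 ++ p.1 :: beval []).getLast? = ([p.1] : List ℕ).getLast?
      rw [show beval [] = [] from rfl]
      rw [getLast?_append_right _ _ (by simp)]
    | cons q D' =>
      have hne : beval (q :: D') ≠ [] := by
        show q.2 ++ q.1 :: beval D' ≠ []
        simp
      show (p.2 ++ p.1 :: beval (q :: D')).getLast? = _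
      rw [getLast?_append_right _ _ (by simp : p.1 :: beval (q :: D') ≠ [])]
      rw [getLast?_cons_ne _ _ hne, ih (by simp)]
      show _ = (p.1 :: q.1 :: List.map Prod.fst D').getLast?
      rw [List.getLast?_cons_cons]
      rfl

lemma bsplit_prepend (C : Finset ℕ) : ∀ (A : List ℕ) (c w D'), (∀ x ∈ A, x ∉ C) → c ∈ C →
    bsplit C w = D' → bsplit C (A ++ c :: w) = (c, A) :: D' := by
  intro A
  induction A with
  | nil =>
    intro c w D' _ hc hw
    simp only [List.nil_append, bsplit, if_pos hc, hw]
  | cons x A ih =>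
    intro c w D' hA hc hw
    have hx : x ∉ C := hA x (by simp)
    have hrec := ih c w D' (fun y hy => hA y (by simp [hy])) hc hw
    show bsplit C (x :: (A ++ c :: w)) = _
    simp only [bsplit, if_neg hx, hrec]

lemma bsplit_beval : ∀ (D : List (ℕ × List ℕ)) (C : Finset ℕ), (beval D).Nodup →
    (∀ x ∈ beval D, (x ∈ C ↔ x ∈ D.map Prod.fst)) → bsplit C (beval D) = D := by
  intro D
  induction D with
  | nil => intro C _ _; simp [beval, bsplit]
  | cons p D ih =>
    intro C hnd hC
    obtain ⟨c, A⟩ := p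
    have hbev : beval ((c, A) :: D) = A ++ c :: beval D := rfl
    rw [hbev] at hnd hC ⊢
    have hdisj : List.Disjoint A (c :: beval D) := List.disjoint_of_nodup_append hnd
    have h1 : (c :: beval D).Nodup := hnd.of_append_right
    have hcbev : c ∉ beval D := (List.nodup_cons.1 h1).1
    have hbevnd : (beval D).Nodup := (List.nodup_cons.1 h1).2
    have hAnotC : ∀ x ∈ A, x ∉ C := by
      intro x hxA hxC
      have hx : x ∈ A ++ c :: beval D := by simp [hxA]
      have h5 := (hC x hx).1 hxC
      rw [List.map_cons] at h5
      rcases List.mem_cons.1 h5 with heq | h'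
      · exact hdisj hxA (by simp [heq])
      · exact hdisj hxA (by simp [fst_mem_beval D x h'])
    have hcC : c ∈ C := by
      have hc : c ∈ A ++ c :: beval D := by simp
      exact (hC c hc).2 (by simp)
    have hrec : bsplit C (beval D) = D := by
      apply ih C hbevnd
      intro x hx
      have hx' : x ∈ A ++ c :: beval D := by simp [hx]
      have hxc : x ≠ c := fun h => hcbev (h ▸ hx)
      rw [hC x hx']
      simp only [List.map_cons, List.mem_cons]
      constructor
      · intro h'
        rcases h' with h' | h'
        · exact absurd h' hxc
        · exact h'
      · intro h'
        exact Or.inr h'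
    exact bsplit_prepend C A c (beval D) D hAnotC hcC hrec

lemma eD_cons_ge (p : ℕ × List ℕ) (D : List (ℕ × List ℕ)) : eD D ≤ eD (p :: D) := by
  have := eD_le_length D
  simp only [eD]
  split_ifs <;> omega

lemma eD_drop : ∀ (D : List (ℕ × List ℕ)) (t), t ≤ eD D →
    ∀ x ∈ (beval D).drop ((beval D).length - (t + 1)), x ∈ D.map Prod.fst := by
  intro D
  induction D with
  | nil => intro t _ x hx; simp [beval] at hx
  | cons p D ih =>
    intro t ht x hx
    obtain ⟨c, A⟩ := p
    have hbev : beval ((c, A) :: D) = A ++ c :: beval D := rfl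
    by_cases hD : eD D = D.length ∧ A = []
    · obtain ⟨hD1, rfl⟩ := hD
      have hbevD : beval D = D.map Prod.fst := beval_allEmpty D ((eD_eq_length_iff D).1 hD1)
      have hmem : x ∈ c :: beval D := by
        have := List.mem_of_mem_drop hx
        simpa [hbev] using this
      rw [hbevD] at hmem
      simpa using hmem
    · have heq : eD ((c, A) :: D) = eD D := by simp only [eD, if_neg hD]
      rw [heq] at ht
      have hle := eD_le_length D
      have hlenb := length_le_beval D
      by_cases hw : t + 1 ≤ (beval D).length
      · have hsplit : A ++ c :: beval D = (A ++ [c]) ++ beval D := by simp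
        have harith : (A ++ c :: beval D).length - (t + 1)
            = (A ++ [c]).length + ((beval D).length - (t + 1)) := by
          simp only [List.length_append, List.length_cons, List.length_nil]
          omega
        rw [hbev, harith, hsplit, List.drop_length_add_append] at hx
        have := ih t ht x hx
        simpa using Or.inr this
      · have hall : eD D = D.length := by omega
        have hlenEq : (beval D).length = D.length := by omega
        have hbevD : beval D = D.map Prod.fst := beval_allEmpty D ((eD_eq_length_iff D).1 hall)
        have harith : (A ++ c :: beval D).length - (t + 1) = A.length := by
          simp only [List.length_append, List.length_cons]
          omega
        rw [hbev, harith] at hx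
        have hx' : x ∈ c :: beval D := by
          have : (A ++ c :: beval D).drop A.length = c :: beval D := List.drop_left
          rw [this] at hx
          exact hx
        rw [hbevD] at hx'
        simpa using hx'

lemma bsplit_all (C : Finset ℕ) : ∀ (l : List ℕ), (∀ x ∈ l, x ∈ C) →
    eD (bsplit C l) = l.length ∧ (bsplit C l).length = l.length := by
  intro l
  induction l with
  | nil => simp [bsplit, eD]
  | cons x l ih =>
    intro hall
    obtain ⟨h1, h2⟩ := ih (fun y hy => hall y (by simp [hy]))
    have hx : x ∈ C := hall x (by simp)
    simp only [bsplit, if_pos hx, eD, List.length_cons]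
    rw [if_pos ⟨h1.trans h2.symm, trivial⟩]
    omega

lemma eD_bsplit_ge (C : Finset ℕ) : ∀ (l : List ℕ) (t), t + 1 ≤ l.length →
    (∀ x ∈ l.drop (l.length - (t + 1)), x ∈ C) → t ≤ eD (bsplit C l) := by
  intro l
  induction l with
  | nil => intro t h _; simp at h
  | cons x l ih =>
    intro t ht hreg
    simp only [List.length_cons] at ht hreg
    by_cases htL : t + 1 ≤ l.length
    · have hreg' : ∀ y ∈ l.drop (l.length - (t + 1)), y ∈ C := by
        intro y hy
        apply hreg
        rw [show l.length + 1 - (t + 1) = (l.length - (t + 1)) + 1 from by omega,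
          List.drop_succ_cons]
        exact hy
      have hIH := ih t htL hreg'
      by_cases hx : x ∈ C
      · simp only [bsplit, if_pos hx]
        exact le_trans hIH (eD_cons_ge _ _)
      · simp only [bsplit, if_neg hx]
        cases hB : bsplit C l with
        | nil =>
          rw [hB] at hIH
          simpa [eD] using hIH
        | cons q D =>
          obtain ⟨c, A⟩ := q
          simp only [hB]
          rw [hB] at hIH
          have hgoal : eD ((c, x :: A) :: D) = eD D := by
            simp only [eD]
            rw [if_neg (by simp)]
          rw [hgoal]
          by_cases hc : eD D = D.length ∧ A = []
          · have hcount : t + 1 ≤ (l.filter (· ∈ C)).length := by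
              have hsub : (l.drop (l.length - (t + 1))).Sublist l := List.drop_sublist _ _
              have hfeq : (l.drop (l.length - (t + 1))).filter (· ∈ C)
                  = l.drop (l.length - (t + 1)) :=
                List.filter_eq_self.2 (fun y hy => by simpa using hreg' y hy)
              calc t + 1 = (l.drop (l.length - (t + 1))).length := by
                    rw [List.length_drop]; omega
                _ = ((l.drop (l.length - (t + 1))).filter (· ∈ C)).length := by rw [hfeq]
                _ ≤ (l.filter (· ∈ C)).length := (hsub.filter _).length_le
            have hflen : (l.filter (· ∈ C)).length = D.length + 1 := by
              rw [← map_fst_bsplit C l, hB]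
              simp
            rw [hc.1]
            omega
          · have : eD ((c, A) :: D) = eD D := by simp only [eD, if_neg hc]
            rw [this] at hIH
            exact hIH
    · have hall : ∀ y ∈ x :: l, y ∈ C := by
        intro y hy
        apply hreg
        rw [show l.length + 1 - (t + 1) = 0 from by omega, List.drop_zero]
        exact hy
      obtain ⟨h1, h2⟩ := bsplit_all C (x :: l) hall
      rw [h1]
      simp only [List.length_cons]
      omega

lemma fst_mem_ltrS_beval : ∀ (D : List (ℕ × List ℕ)) (a), ValidF a D →
    ∀ c ∈ D.map Prod.fst, c ∈ ltrS a (beval D) := by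
  intro D
  induction D with
  | nil => intro a _ c hc; simp at hc
  | cons p D ih =>
    intro a hv c hc
    obtain ⟨c1, A⟩ := p
    obtain ⟨h1, h2, h3⟩ := hv
    simp only at h1 h2 h3
    show c ∈ ltrS a (A ++ c1 :: beval D)
    rw [List.map_cons] at hc
    rcases List.mem_cons.1 hc with rfl | hc'
    · exact mem_ltrS_intro A a _ (beval D) h2 h1
    · have hin : c ∈ ltrS c1 (beval D) := ih c1 h3 c hc'
      have hfold : (A ++ [c1]).foldl max a = c1 := by
        rw [List.foldl_append]
        show max ((A.foldl max a)) c1 = c1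
        have := foldl_max_le A a c1 h1.le (fun x hx => (h2 x hx).le)
        omega
      have hsub := ltrS_suffix_sub (A ++ [c1]) (beval D) a
      rw [hfold] at hsub
      have happ : (A ++ [c1]) ++ beval D = A ++ c1 :: beval D := by simp
      rw [happ] at hsub
      exact hsub hin

lemma idList_nodup (n : ℕ) : (idList n).Nodup :=
  (List.nodup_range (n := n)).map (fun a b h => by omega)

lemma idList_pairwise (n : ℕ) : (idList n).Pairwise (· < ·) :=
  (List.pairwise_lt_range (n := n)).map _ (fun a b h => by omega)

lemma idList_pos (n : ℕ) : ∀ x ∈ idList n, 0 < x := by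
  intro x hx
  simp [idList] at hx
  omega

lemma perm_pos {n : ℕ} {l : List ℕ} (h : l.Perm (idList n)) : ∀ x ∈ l, 0 < x :=
  fun x hx => idList_pos n x (h.subset hx)

lemma perm_nodup {n : ℕ} {l : List ℕ} (h : l.Perm (idList n)) : l.Nodup :=
  h.nodup_iff.2 (idList_nodup n)

lemma sorted_eq_idList {n : ℕ} {l : List ℕ} (h : l.Perm (idList n))
    (hc : List.Chain' (· < ·) l) : l = idList n := by
  have hp : l.Pairwise (· < ·) := List.isChain_iff_pairwise.1 hc
  exact List.Perm.eq_of_pairwise' (r := (· ≤ ·))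
    (hp.imp le_of_lt) ((idList_pairwise n).imp le_of_lt) h

lemma bpass_idList (n : ℕ) : bpass (idList n) = idList n :=
  bpass_chain _ ((List.isChain_iff_pairwise.2 (idList_pairwise n)).imp (fun _ _ h => le_of_lt h))

lemma iter_perm {n : ℕ} (t : ℕ) {σ : List ℕ} (h : σ.Perm (idList n)) :
    (bpass^[t] σ).Perm (idList n) := by
  induction t with
  | zero => simpa
  | succ t ih =>
    rw [Function.iterate_succ_apply']
    exact (bpass_perm _).trans ih

lemma suffF_ge {n : ℕ} : ∀ (t : ℕ) (σ τ : List ℕ), σ.Perm (idList n) → bpass^[t] σ = τ →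
    τ ≠ idList n → t ≤ F 0 τ := by
  intro t
  induction t with
  | zero => intro σ τ _ _ _; omega
  | succ t ih =>
    intro σ τ hσ hstep hne
    have hbρ : bpass (bpass^[t] σ) = τ := by
      rw [← Function.iterate_succ_apply' bpass t σ]
      exact hstep
    set ρ := bpass^[t] σ with hρdef
    have hρperm : ρ.Perm (idList n) := iter_perm t hσ
    have hρne : ρ ≠ idList n := by
      intro h
      rw [h, bpass_idList] at hbρ
      exact hne hbρ.symm
    have hIH : t ≤ F 0 ρ := ih σ ρ hσ rfl hρne
    have hnd : ρ.Nodup := perm_nodup hρperm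
    have hpos : ∀ x ∈ ρ, 0 < x := perm_pos hρperm
    have hval : ValidF 0 (decomp ρ) := decomp_valid ρ 0 hnd
      (fun x hx => hpos x (head?_mem _ x hx))
    have hsev : seval (decomp ρ) = ρ := seval_decomp ρ
    have hFρ := F_seval (decomp ρ) 0 hval
    rw [hsev] at hFρ
    by_cases hallE : eD (decomp ρ) = (decomp ρ).length
    · rw [if_pos hallE] at hFρ
      have hch := F_full_chain ρ 0 hFρ
      exact absurd (sorted_eq_idList hρperm hch.tail) hρne
    · rw [if_neg hallE] at hFρ
      have hge := F_beval_ge (decomp ρ) 0 hval hallE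
      have hbevτ : beval (decomp ρ) = τ := by
        rw [← bpass_seval (decomp ρ) 0 hval, hsev, hbρ]
      rw [hbevτ] at hge
      omega

lemma no_period {n : ℕ} {π : List ℕ} (hπ : π.Perm (idList n)) (hne : π ≠ idList n) :
    ∀ t, 1 ≤ t → bpass^[t] π ≠ π := by
  intro t ht heq
  have hpump : ∀ k, bpass^[t * k] π = π := by
    intro k
    induction k with
    | zero => simp
    | succ k ihk =>
      rw [show t * (k + 1) = t * k + t from by ring, Function.iterate_add_apply, heq, ihk]
  have h1 := suffF_ge (t * (π.length + 1)) π π hπ (hpump _) hne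
  have h2 := F_le_length π 0
  have h3 : π.length + 1 ≤ t * (π.length + 1) := Nat.le_mul_of_pos_left _ ht
  omega


lemma isLTRMax_zero (b : ℕ) (l : List ℕ) : IsLTRMax (b :: l) 0 :=
  ⟨by simp, fun i hi => absurd hi (by omega)⟩

lemma isLTRMax_succ (b : ℕ) (l : List ℕ) (j : ℕ) :
    IsLTRMax (b :: l) (j + 1) ↔ b < l.getD j 0 ∧ IsLTRMax l j := by
  unfold IsLTRMax
  constructor
  · rintro ⟨h1, h2⟩
    have hb := h2 0 (by omega)
    rw [List.getD_cons_zero, List.getD_cons_succ] at hb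
    refine ⟨hb, by simpa using h1, ?_⟩
    intro i hi
    have h3 := h2 (i + 1) (by omega)
    rwa [List.getD_cons_succ, List.getD_cons_succ] at h3
  · rintro ⟨hb, h1, h2⟩
    refine ⟨by simpa using h1, ?_⟩
    intro i hi
    cases i with
    | zero => rwa [List.getD_cons_zero, List.getD_cons_succ]
    | succ i =>
      rw [List.getD_cons_succ, List.getD_cons_succ]
      exact h2 i (by omega)

def Gc (a : ℕ) (l : List ℕ) : ℕ :=
  ((List.range l.length).filter fun j =>
    decide (a < l.getD j 0) && decide (IsLTRMax l j)).length

def Fc (a : ℕ) (l : List ℕ) : ℕ :=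
  ((List.range l.length).takeWhile fun j =>
    decide (a < l.getD (l.length - 1 - j) 0) && decide (IsLTRMax l (l.length - 1 - j))).length

lemma Gc_cons (a b : ℕ) (l : List ℕ) :
    Gc a (b :: l) = (if a < b then 1 else 0) + Gc (max a b) l := by
  unfold Gc
  rw [List.length_cons, List.range_succ_eq_map, List.filter_cons]
  have h0 : (decide (a < (b :: l).getD 0 0) && decide (IsLTRMax (b :: l) 0)) = decide (a < b) := by
    rw [List.getD_cons_zero, decide_eq_true (isLTRMax_zero b l), Bool.and_true]
  rw [h0]
  have hcong : ∀ x ∈ List.range l.length,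
      ((fun j => decide (a < (b :: l).getD j 0) && decide (IsLTRMax (b :: l) j)) ∘ Nat.succ) x
        = (fun j => decide (max a b < l.getD j 0) && decide (IsLTRMax l j)) x := by
    intro x _
    simp only [Function.comp_apply]
    rw [Bool.eq_iff_iff]
    simp only [Bool.and_eq_true, decide_eq_true_eq]
    rw [show Nat.succ x = x + 1 from rfl, List.getD_cons_succ, isLTRMax_succ, Nat.max_lt]
    tauto
  rw [List.filter_map, List.filter_congr hcong]
  by_cases hab : a < b
  · rw [if_pos (decide_eq_true hab), if_pos hab, List.length_cons, List.length_map]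
    omega
  · rw [if_neg (by simp [hab]), if_neg hab, List.length_map]
    omega

lemma Gc_eq_G : ∀ (l : List ℕ) (a), Gc a l = G a l := by
  intro l
  induction l with
  | nil => intro a; simp [Gc, G]
  | cons b l ih =>
    intro a
    rw [Gc_cons, ih]
    rfl

lemma ltrCount_eq_Gc (l : List ℕ) (hpos : ∀ x ∈ l, 0 < x) : ltrCount l = Gc 0 l := by
  unfold ltrCount Gc
  congr 1
  apply List.filter_congr
  intro j hj
  rw [List.mem_range] at hj
  rw [Bool.eq_iff_iff]
  simp only [Bool.and_eq_true, decide_eq_true_eq]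
  constructor
  · intro h
    refine ⟨?_, h⟩
    have hjl : j < l.length := h.1
    have hmem : l.getD j 0 ∈ l := by
      rw [List.getD_eq_getElem l 0 hjl]
      exact List.getElem_mem hjl
    exact hpos _ hmem
  · exact And.right

lemma takeWhile_congr' {p q : ℕ → Bool} : ∀ (l : List ℕ), (∀ x ∈ l, p x = q x) →
    l.takeWhile p = l.takeWhile q := by
  intro l
  induction l with
  | nil => intro _; simp
  | cons x l ih =>
    intro h
    rw [List.takeWhile_cons, List.takeWhile_cons, h x (by simp)]
    cases hq : q x
    · simp
    · simp only [if_true]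
      rw [ih (fun y hy => h y (by simp [hy]))]

lemma takeWhile_append_not {p : ℕ → Bool} : ∀ (u v : List ℕ), u.takeWhile p ≠ u →
    (u ++ v).takeWhile p = u.takeWhile p := by
  intro u
  induction u with
  | nil => intro v h; simp at h
  | cons x u ih =>
    intro v h
    rw [List.cons_append, List.takeWhile_cons, List.takeWhile_cons]
    cases hx : p x
    · simp
    · have h' : u.takeWhile p ≠ u := by
        intro he
        apply h
        rw [List.takeWhile_cons, hx, he]
        simp
      simp only [if_true]
      rw [ih v h']

lemma takeWhile_append_full {p : ℕ → Bool} : ∀ (u v : List ℕ), (∀ x ∈ u, p x = true) →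
    (u ++ v).takeWhile p = u ++ v.takeWhile p := by
  intro u
  induction u with
  | nil => intro v _; simp
  | cons x u ih =>
    intro v h
    rw [List.cons_append, List.takeWhile_cons, h x (by simp)]
    simp only [if_true]
    rw [ih v (fun y hy => h y (by simp [hy])), List.cons_append]

lemma Fc_cons (a b : ℕ) (l : List ℕ) :
    Fc a (b :: l) = if Fc (max a b) l = l.length ∧ a < b then l.length + 1
      else Fc (max a b) l := by
  have hq : Fc (max a b) l = ((List.range l.length).takeWhile fun j =>
      decide (max a b < l.getD (l.length - 1 - j) 0) &&
      decide (IsLTRMax l (l.length - 1 - j))).length := rfl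
  unfold Fc
  rw [List.length_cons, List.range_succ]
  set p : ℕ → Bool := fun j => decide (a < (b :: l).getD (l.length + 1 - 1 - j) 0) &&
      decide (IsLTRMax (b :: l) (l.length + 1 - 1 - j)) with hp
  set q : ℕ → Bool := fun j => decide (max a b < l.getD (l.length - 1 - j) 0) &&
      decide (IsLTRMax l (l.length - 1 - j)) with hqdef
  have hcong : ∀ x ∈ List.range l.length, p x = q x := by
    intro x hx
    rw [List.mem_range] at hx
    rw [hp, hqdef]
    simp only []
    rw [show l.length + 1 - 1 - x = (l.length - 1 - x) + 1 from by omega]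
    rw [Bool.eq_iff_iff]
    simp only [Bool.and_eq_true, decide_eq_true_eq]
    rw [List.getD_cons_succ, isLTRMax_succ, Nat.max_lt]
    tauto
  have hpL : p l.length = decide (a < b) := by
    rw [hp]
    simp only []
    rw [show l.length + 1 - 1 - l.length = 0 from by omega]
    rw [List.getD_cons_zero, decide_eq_true (isLTRMax_zero b l), Bool.and_true]
  by_cases hfull : Fc (max a b) l = l.length
  · have htw : (List.range l.length).takeWhile q = List.range l.length := by
      apply List.IsPrefix.eq_of_length (List.takeWhile_prefix _)
      rw [← hq, hfull, List.length_range]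
    have hallp : ∀ x ∈ List.range l.length, p x = true := by
      intro x hx
      rw [hcong x hx]
      exact List.mem_takeWhile_imp (show x ∈ (List.range l.length).takeWhile q from by
        rw [htw]; exact hx)
    rw [takeWhile_append_full _ _ hallp, List.length_append, List.length_range]
    by_cases hab : a < b
    · rw [if_pos ⟨hfull, hab⟩]
      have h1 : [l.length].takeWhile p = [l.length] := by
        rw [show ([l.length] : List ℕ) = l.length :: [] from rfl, List.takeWhile_cons, hpL,
          decide_eq_true hab]
        simp
      rw [h1]
      simp
    · rw [if_neg (fun h => hab h.2)]
      have h1 : [l.length].takeWhile p = [] := by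
        rw [show ([l.length] : List ℕ) = l.length :: [] from rfl, List.takeWhile_cons, hpL]
        simp [hab]
      rw [h1, ← hq, hfull]
      simp
  · have hne2 : (List.range l.length).takeWhile p ≠ List.range l.length := by
      rw [takeWhile_congr' _ hcong]
      intro he
      apply hfull
      rw [hq, he, List.length_range]
    rw [takeWhile_append_not _ _ hne2, takeWhile_congr' _ hcong, ← hq]
    rw [if_neg (fun h => hfull h.1)]

lemma Fc_eq_F : ∀ (l : List ℕ) (a), Fc a l = F a l := by
  intro l
  induction l with
  | nil => intro a; simp [Fc, F]
  | cons b l ih =>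
    intro a
    rw [Fc_cons, ih]
    rfl

lemma suffLen_eq_Fc (l : List ℕ) (hpos : ∀ x ∈ l, 0 < x) : suffLen l = Fc 0 l := by
  unfold suffLen Fc
  congr 1
  apply takeWhile_congr'
  intro j hj
  rw [List.mem_range] at hj
  rw [Bool.eq_iff_iff]
  simp only [Bool.and_eq_true, decide_eq_true_eq]
  constructor
  · intro h
    refine ⟨?_, h⟩
    have hjl : l.length - 1 - j < l.length := h.1
    have hmem : l.getD (l.length - 1 - j) 0 ∈ l := by
      rw [List.getD_eq_getElem l 0 hjl]
      exact List.getElem_mem hjl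
    exact hpos _ hmem
  · exact And.right

lemma suffLen_eq_F (l : List ℕ) (hpos : ∀ x ∈ l, 0 < x) : suffLen l = F 0 l :=
  (suffLen_eq_Fc l hpos).trans (Fc_eq_F l 0)

lemma ltrCount_eq_G (l : List ℕ) (hpos : ∀ x ∈ l, 0 < x) : ltrCount l = G 0 l :=
  (ltrCount_eq_Gc l hpos).trans (Gc_eq_G l 0)

lemma getLast?_mem : ∀ (l : List ℕ) (x), l.getLast? = some x → x ∈ l := by
  intro l
  induction l with
  | nil => intro x h; simp at h
  | cons b l ih =>
    intro x h
    cases l with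
    | nil =>
      have hbx : b = x := by simpa using h
      simp [hbx]
    | cons c l' =>
      rw [List.getLast?_cons_cons] at h
      simp [ih x h]

def permsF (n : ℕ) : Finset (List ℕ) := (idList n).permutations.toFinset

lemma mem_permsF {n : ℕ} {σ : List ℕ} : σ ∈ permsF n ↔ σ.Perm (idList n) := by
  simp [permsF, List.mem_toFinset, List.mem_permutations]

lemma main (n : ℕ) : ∀ (j : ℕ) (π : List ℕ), π.Perm (idList n) → π ≠ idList n → j ≤ F 0 π →
    ((permsF n).filter fun σ => bpass^[j] σ = π).card
      = j.factorial * (j + 1) ^ (G 0 π - j) := by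
  intro j
  induction j with
  | zero =>
    intro π hπ hne _
    have hset : ((permsF n).filter fun σ => bpass^[0] σ = π) = {π} := by
      ext σ
      rw [Finset.mem_filter]
      simp only [Function.iterate_zero, id_eq, Finset.mem_singleton]
      constructor
      · rintro ⟨_, h⟩; exact h
      · rintro rfl; exact ⟨mem_permsF.2 hπ, rfl⟩
    rw [hset, Finset.card_singleton]
    simp [Nat.factorial]
  | succ j ih =>
    intro π hπ hne hj
    have hnd : π.Nodup := perm_nodup hπ
    have hpos : ∀ x ∈ π, 0 < x := perm_pos hπ
    have hπnil : π ≠ [] := by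
      intro h
      apply hne
      rw [h]
      have := hπ
      rw [h] at this
      exact (this.nil_eq)
    obtain ⟨c₀, hc₀⟩ : ∃ c, π.getLast? = some c := by
      cases hq : π.getLast? with
      | none => exact absurd (List.getLast?_eq_none_iff.1 hq) hπnil
      | some c => exact ⟨c, rfl⟩
    set M : Finset ℕ := ltrS 0 π with hM
    have hjL : j + 1 ≤ π.length := le_trans hj (F_le_length π 0)
    set R : List ℕ := π.drop (π.length - (j + 1)) with hR
    have hRlen : R.length = j + 1 := by rw [hR, List.length_drop]; omega
    have hRM : ∀ x ∈ R, x ∈ M := fun x hx => drop_mem_ltrS π 0 (j + 1) hj x hx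
    set T : Finset ℕ := R.toFinset with hT
    have hRnd : R.Nodup := (List.drop_sublist _ _).nodup hnd
    have hTcard : T.card = j + 1 := by
      rw [hT, List.toFinset_card_of_nodup hRnd, hRlen]
    have hTM : T ⊆ M := fun x hx => hRM x (List.mem_toFinset.1 hx)
    have hMcard : M.card = G 0 π := ltrS_card π 0 hnd
    have hMπ : ∀ x ∈ M, x ∈ π := fun x hx => (mem_ltrS _ _ _ hx).2
    have hRne : R ≠ [] := by
      intro h
      rw [h] at hRlen
      simp at hRlen
    have hc₀R : R.getLast? = some c₀ := by
      have hsplit := List.take_append_drop (π.length - (j + 1)) π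
      rw [← hsplit] at hc₀
      rwa [getLast?_append_right _ _ hRne] at hc₀
    have hc₀T : c₀ ∈ T := by
      rw [hT, List.mem_toFinset]
      exact getLast?_mem _ c₀ hc₀R
    set Cs : Finset (Finset ℕ) := M.powerset.filter (fun C => c₀ ∈ C) with hCs
    have hfiltC : ∀ C ∈ Cs, (π.filter (· ∈ C)).toFinset = C := by
      intro C hC
      rw [hCs, Finset.mem_filter, Finset.mem_powerset] at hC
      ext x
      rw [List.toFinset_filter]
      simp only [Finset.mem_filter, List.mem_toFinset, decide_eq_true_eq]
      exact ⟨fun h => h.2, fun h => ⟨hMπ x (hC.1 h), h⟩⟩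
    have hCkey : ∀ C ∈ Cs, ValidF 0 (bsplit C π) ∧ beval (bsplit C π) = π ∧
        (seval (bsplit C π)).Perm (idList n) ∧ seval (bsplit C π) ≠ idList n ∧
        F 0 (seval (bsplit C π)) = eD (bsplit C π) ∧ (bsplit C π).length = C.card := by
      intro C hC
      have hC' := hC
      rw [hCs, Finset.mem_filter, Finset.mem_powerset] at hC'
      obtain ⟨hCM, hc₀C⟩ := hC'
      have hval : ValidF 0 (bsplit C π) := bsplit_valid C π 0 hnd (fun x _ hxC => hCM hxC)
      have hbev : beval (bsplit C π) = π := beval_bsplit C π c₀ hc₀ hc₀C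
      have hperm : (seval (bsplit C π)).Perm (idList n) := by
        have h := seval_perm_beval (bsplit C π)
        rw [hbev] at h
        exact h.trans hπ
      have hbp : bpass (seval (bsplit C π)) = π := by
        rw [bpass_seval _ 0 hval, hbev]
      have hsne : seval (bsplit C π) ≠ idList n := by
        intro h
        apply hne
        rw [h, bpass_idList] at hbp
        exact hbp.symm
      have hFeq : F 0 (seval (bsplit C π)) = eD (bsplit C π) := by
        have h1 := F_seval (bsplit C π) 0 hval
        by_cases hallE : eD (bsplit C π) = (bsplit C π).length
        · rw [if_pos hallE] at h1
          exact absurd (sorted_eq_idList hperm (F_full_chain _ 0 h1).tail) hsne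
        · rw [if_neg hallE] at h1
          exact h1
      have hlenC : (bsplit C π).length = C.card := by
        have h1 := congrArg List.length (map_fst_bsplit C π)
        rw [List.length_map] at h1
        have h3 : (π.filter (· ∈ C)).Nodup := hnd.filter _
        rw [h1, ← List.toFinset_card_of_nodup h3, hfiltC C hC]
      exact ⟨hval, hbev, hperm, hsne, hFeq, hlenC⟩
    have hρfacts : ∀ ρ ∈ (permsF n).filter (fun ρ => bpass ρ = π),
        ValidF 0 (decomp ρ) ∧ seval (decomp ρ) = ρ ∧ beval (decomp ρ) = π ∧
        decomp ρ ≠ [] ∧ bsplit ((decomp ρ).map Prod.fst).toFinset π = decomp ρ := by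
      intro ρ hρ
      rw [Finset.mem_filter] at hρ
      obtain ⟨hρP, hρbp⟩ := hρ
      have hρperm := mem_permsF.1 hρP
      have hρnd := perm_nodup hρperm
      have hρpos := perm_pos hρperm
      have hρne : ρ ≠ [] := by
        intro h
        rw [h] at hρbp
        exact hπnil (hρbp.symm.trans (by simp [bpass]))
      have hval : ValidF 0 (decomp ρ) :=
        decomp_valid ρ 0 hρnd (fun x hx => hρpos x (head?_mem _ x hx))
      have hsev : seval (decomp ρ) = ρ := seval_decomp ρ
      have hbev : beval (decomp ρ) = π := by
        rw [← bpass_seval (decomp ρ) 0 hval, hsev, hρbp]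
      have hDne : decomp ρ ≠ [] := by
        intro h
        apply hρne
        rw [← hsev, h]
        rfl
      have hrec : bsplit ((decomp ρ).map Prod.fst).toFinset π = decomp ρ := by
        have := bsplit_beval (decomp ρ) ((decomp ρ).map Prod.fst).toFinset
          (by rw [hbev]; exact hnd) (fun x _ => List.mem_toFinset)
        rwa [hbev] at this
      exact ⟨hval, hsev, hbev, hDne, hrec⟩
    have hmapsto : ∀ σ ∈ (permsF n).filter (fun σ => bpass^[j + 1] σ = π),
        bpass^[j] σ ∈ (permsF n).filter fun ρ => bpass ρ = π := by
      intro σ hσ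
      rw [Finset.mem_filter] at hσ ⊢
      obtain ⟨h1, h2⟩ := hσ
      refine ⟨mem_permsF.2 (iter_perm j (mem_permsF.1 h1)), ?_⟩
      rw [← Function.iterate_succ_apply' bpass j σ]
      exact h2
    rw [Finset.card_eq_sum_card_fiberwise hmapsto]
    have hfiber : ∀ ρ ∈ (permsF n).filter (fun ρ => bpass ρ = π),
        (((permsF n).filter fun σ => bpass^[j + 1] σ = π).filter
            fun σ => bpass^[j] σ = ρ).card
          = ((permsF n).filter fun σ => bpass^[j] σ = ρ).card := by
      intro ρ hρ
      rw [Finset.mem_filter] at hρ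
      congr 1
      rw [Finset.filter_filter]
      apply Finset.filter_congr
      intro σ _
      constructor
      · exact And.right
      · intro h
        refine ⟨?_, h⟩
        rw [Function.iterate_succ_apply' bpass j σ, h, hρ.2]
    rw [Finset.sum_congr rfl hfiber]
    have hbij : ∑ ρ ∈ (permsF n).filter (fun ρ => bpass ρ = π),
        ((permsF n).filter fun σ => bpass^[j] σ = ρ).card
      = ∑ C ∈ Cs, ((permsF n).filter fun σ => bpass^[j] σ = seval (bsplit C π)).card := by
      apply Finset.sum_bij' (i := fun ρ _ => ((decomp ρ).map Prod.fst).toFinset)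
        (j := fun C _ => seval (bsplit C π))
      · intro ρ hρ
        obtain ⟨hval, hsev, hbev, hDne, hrec⟩ := hρfacts ρ hρ
        rw [hCs, Finset.mem_filter, Finset.mem_powerset]
        constructor
        · intro c hc
          rw [List.mem_toFinset] at hc
          have := fst_mem_ltrS_beval (decomp ρ) 0 hval c hc
          rwa [hbev] at this
        · rw [List.mem_toFinset]
          have hlast : ((decomp ρ).map Prod.fst).getLast? = some c₀ := by
            rw [← beval_getLast? (decomp ρ) hDne, hbev]
            exact hc₀
          exact getLast?_mem _ c₀ hlast
      · intro C hC
        obtain ⟨hval, hbev, hperm, _, _, _⟩ := hCkey C hC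
        rw [Finset.mem_filter]
        exact ⟨mem_permsF.2 hperm, by rw [bpass_seval _ 0 hval, hbev]⟩
      · intro ρ hρ
        obtain ⟨hval, hsev, hbev, hDne, hrec⟩ := hρfacts ρ hρ
        rw [hrec, hsev]
      · intro C hC
        obtain ⟨hval, hbev, hperm, _, _, _⟩ := hCkey C hC
        rw [decomp_seval (bsplit C π) 0 hval, map_fst_bsplit, hfiltC C hC]
      · intro ρ hρ
        obtain ⟨hval, hsev, hbev, hDne, hrec⟩ := hρfacts ρ hρ
        rw [hrec, hsev]
    rw [hbij]
    rw [← Finset.sum_filter_add_sum_filter_not Cs (fun C => T ⊆ C)]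
    have hbad : ∀ C ∈ Cs.filter (fun C => ¬ T ⊆ C),
        ((permsF n).filter fun σ => bpass^[j] σ = seval (bsplit C π)).card = 0 := by
      intro C hC
      rw [Finset.mem_filter] at hC
      obtain ⟨hCs', hnT⟩ := hC
      obtain ⟨hval, hbev, hperm, hsne, hFeq, hlenC⟩ := hCkey C hCs'
      rw [Finset.card_eq_zero, Finset.filter_eq_empty_iff]
      intro σ hσP hcon
      have hjle := suffF_ge j σ (seval (bsplit C π)) (mem_permsF.1 hσP) hcon hsne
      rw [hFeq] at hjle
      apply hnT
      intro x hxT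
      have hxR : x ∈ R := List.mem_toFinset.1 hxT
      have hmem := eD_drop (bsplit C π) j hjle x (by rw [hbev]; exact hxR)
      rw [map_fst_bsplit] at hmem
      have := List.of_mem_filter hmem
      simpa using this
    rw [Finset.sum_eq_zero hbad, add_zero]
    have hgood : ∀ C ∈ Cs.filter (fun C => T ⊆ C),
        ((permsF n).filter fun σ => bpass^[j] σ = seval (bsplit C π)).card
          = j.factorial * (j + 1) ^ (C.card - j) := by
      intro C hC
      rw [Finset.mem_filter] at hC
      obtain ⟨hCs', hTC⟩ := hC
      obtain ⟨hval, hbev, hperm, hsne, hFeq, hlenC⟩ := hCkey C hCs'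
      have heDge : j ≤ eD (bsplit C π) := by
        apply eD_bsplit_ge C π j hjL
        intro x hx
        exact hTC (List.mem_toFinset.2 hx)
      have hjF : j ≤ F 0 (seval (bsplit C π)) := by
        rw [hFeq]
        exact heDge
      rw [ih (seval (bsplit C π)) hperm hsne hjF]
      rw [G_seval _ 0 hval, hlenC]
    rw [Finset.sum_congr rfl hgood]
    have hre : ∑ C ∈ Cs.filter (fun C => T ⊆ C), j.factorial * (j + 1) ^ (C.card - j)
        = ∑ U ∈ (M \ T).powerset, j.factorial * (j + 1) ^ (U.card + 1) := by
      apply Finset.sum_bij' (i := fun C _ => C \ T) (j := fun U _ => U ∪ T)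
      · intro C hC
        rw [Finset.mem_filter] at hC
        have hC' := hC.1
        rw [hCs, Finset.mem_filter, Finset.mem_powerset] at hC'
        rw [Finset.mem_powerset]
        exact Finset.sdiff_subset_sdiff hC'.1 le_rfl
      · intro U hU
        rw [Finset.mem_powerset] at hU
        rw [Finset.mem_filter]
        refine ⟨?_, Finset.subset_union_right⟩
        rw [hCs, Finset.mem_filter, Finset.mem_powerset]
        constructor
        · exact Finset.union_subset (hU.trans (Finset.sdiff_subset)) hTM
        · exact Finset.mem_union_right U hc₀T
      · intro C hC
        rw [Finset.mem_filter] at hC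
        exact Finset.sdiff_union_of_subset hC.2
      · intro U hU
        rw [Finset.mem_powerset] at hU
        ext x
        simp only [Finset.mem_sdiff, Finset.mem_union]
        constructor
        · rintro ⟨h1 | h1, h2⟩
          · exact h1
          · exact absurd h1 h2
        · intro hx
          exact ⟨Or.inl hx, fun hxT => (Finset.mem_sdiff.1 (hU hx)).2 hxT⟩
      · intro C hC
        rw [Finset.mem_filter] at hC
        have h1 : (C \ T).card = C.card - T.card := Finset.card_sdiff_of_subset hC.2
        have h2 : T.card ≤ C.card := Finset.card_le_card hC.2
        rw [h1, hTcard]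
        have h3 : C.card - j = C.card - (j + 1) + 1 := by omega
        rw [h3]
    rw [hre]
    have hsum : ∑ U ∈ (M \ T).powerset, j.factorial * (j + 1) ^ (U.card + 1)
        = j.factorial * (j + 1) * (j + 2) ^ (M \ T).card := by
      have hpa := Finset.prod_add (fun _ : ℕ => (j : ℕ) + 1) (fun _ : ℕ => (1 : ℕ)) (M \ T)
      simp only [Finset.prod_const, one_pow, mul_one] at hpa
      calc ∑ U ∈ (M \ T).powerset, j.factorial * (j + 1) ^ (U.card + 1)
          = ∑ U ∈ (M \ T).powerset, (j.factorial * (j + 1)) * (j + 1) ^ U.card := by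
            apply Finset.sum_congr rfl
            intro U _
            ring
        _ = (j.factorial * (j + 1)) * ∑ U ∈ (M \ T).powerset, (j + 1) ^ U.card := by
            rw [Finset.mul_sum]
        _ = j.factorial * (j + 1) * (j + 2) ^ (M \ T).card := by
            rw [← hpa]
    rw [hsum]
    have hMT : (M \ T).card = G 0 π - (j + 1) := by
      rw [Finset.card_sdiff_of_subset hTM, hTcard, hMcard]
    rw [hMT, Nat.factorial_succ]
    ring

end St17

/-- For `π ≠ id_n` with `k` left-to-right maxima and longest suffix of left-to-right
maxima of length `m`: for every `0 ≤ j ≤ m` the number of nodes at height `j` in `T(π)`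
is `j!·(j+1)^(k-j)`, and the total number of nodes of `T(π)` is
`∑_{j=0}^{m} j!·(j+1)^(k-j)`. -/
theorem stmt_17 (n k m : ℕ) (π : List ℕ) (hπ : IsPermList n π) (hne : π ≠ idList n)
    (hk : ltrCount π = k) (hm : suffLen π = m) :
    (∀ j ≤ m, Set.ncard {σ : List ℕ | IsNodeAt n π σ j} =
      Nat.factorial j * (j + 1) ^ (k - j)) ∧
    Set.ncard {σ : List ℕ | IsNode n π σ} =
      ∑ j ∈ Finset.range (m + 1), Nat.factorial j * (j + 1) ^ (k - j) := by
  classical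
  subst hk
  subst hm
  have hπperm : π.Perm (idList n) := hπ
  have hpos : ∀ x ∈ π, 0 < x := St17.perm_pos hπperm
  have hsuff : suffLen π = St17.F 0 π := St17.suffLen_eq_F π hpos
  have hltr : ltrCount π = St17.G 0 π := St17.ltrCount_eq_G π hpos
  have hlevel : ∀ jj : ℕ, {σ : List ℕ | IsNodeAt n π σ jj}
      = ↑((St17.permsF n).filter fun σ => bpass^[jj] σ = π) := by
    intro jj
    ext σ
    simp only [Set.mem_setOf_eq, Finset.mem_coe, Finset.mem_filter]
    constructor
    · rintro ⟨h1, h2, _⟩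
      exact ⟨St17.mem_permsF.2 h1, h2⟩
    · rintro ⟨h1, h2⟩
      refine ⟨St17.mem_permsF.1 h1, h2, ?_⟩
      intro i hi hcon
      have heq2 : bpass^[jj] σ = bpass^[jj - i] π := by
        rw [← hcon, ← Function.iterate_add_apply]
        congr 1
        omega
      exact St17.no_period hπperm hne (jj - i) (by omega) (heq2.symm.trans h2)
  constructor
  · intro j hj
    rw [hlevel j, Set.ncard_coe_finset]
    rw [St17.main n j π hπperm hne (by rw [← hsuff]; exact hj), hltr]
  · have hset : {σ : List ℕ | IsNode n π σ}
        = ↑((Finset.range (suffLen π + 1)).biUnion fun jj =>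
            (St17.permsF n).filter fun σ => bpass^[jj] σ = π) := by
      ext σ
      simp only [Set.mem_setOf_eq, Finset.mem_coe, Finset.mem_biUnion, Finset.mem_filter,
        Finset.mem_range]
      constructor
      · rintro ⟨h1, jj, h2⟩
        refine ⟨jj, ?_, St17.mem_permsF.2 h1, h2⟩
        have := St17.suffF_ge jj σ π h1 h2 hne
        omega
      · rintro ⟨jj, _, h1, h2⟩
        exact ⟨St17.mem_permsF.1 h1, jj, h2⟩
    rw [hset, Set.ncard_coe_finset]
    rw [Finset.card_biUnion]
    · apply Finset.sum_congr rfl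
      intro jj hjj
      rw [Finset.mem_range] at hjj
      rw [St17.main n jj π hπperm hne (by rw [← hsuff]; omega), hltr]
    · intro x _ y _ hxy
      rw [Function.onFun, Finset.disjoint_left]
      intro σ hσx hσy
      have h1 := Finset.mem_filter.1 hσx
      have h2 := Finset.mem_filter.1 hσy
      rcases Nat.lt_or_ge x y with hlt | hge
      · have heq2 : bpass^[y] σ = bpass^[y - x] π := by
          rw [← h1.2, ← Function.iterate_add_apply]
          congr 1
          omega
        exact St17.no_period hπperm hne (y - x) (by omega) (heq2.symm.trans h2.2)
      · have hlt : y < x := by omega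
        have heq2 : bpass^[x] σ = bpass^[x - y] π := by
          rw [← h2.2, ← Function.iterate_add_apply]
          congr 1
          omega
        exact St17.no_period hπperm hne (x - y) (by omega) (heq2.symm.trans h1.2)
end
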